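/- arXiv:1104.1756 — 3 statements merged into one kernel-verified Lean document; each statement's English description precedes it below -/
import Mathlib

section
/- For every natural number n ≥ 1 the following two identities hold in the field ℚ(X,Z) of rational functions: ∑_{I ⊆ {1,…,n−1}} binom(n,I)_{X^{−1}} · ∏_{i ∈ I} gp((X^{i}·Z)^{n−i}) = (1 − Z^n)/(Z; X)_n = ∑_{I ⊆ {1,…,n−1}} binom(n,I)_{X^{−1}} · ∏_{i ∈ I} gp((X^{n−i}·Z)^{i}). -/
/-!
STATEMENT 1: Proposition `pro:multinomial A` — the two identities for 𝒜_n(X,Z) in ℚ(X,Z).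
-/

noncomputable section

open scoped Classical

/-- The Pochhammer symbol `(A; X)_k = ∏_{i=0}^{k-1} (1 - A·X^i)`. -/
def qPoch {F : Type*} [CommRing F] (A X : F) (k : ℕ) : F :=
  ∏ i ∈ Finset.range k, (1 - A * X ^ i)

/-- `(N)_X! = ∏_{k=1}^{N} (1 - X^k)`, with `(0)_X! = 1`. -/
def qFact {F : Type*} [CommRing F] (X : F) (N : ℕ) : F :=
  ∏ k ∈ Finset.range N, (1 - X ^ (k + 1))

/-- The Gaussian binomial `binom(a,b)_X = (a)_X! / ((a-b)_X! · (b)_X!)`. -/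
def qBinom {F : Type*} [Field F] (X : F) (a b : ℕ) : F :=
  qFact X a / (qFact X (a - b) * qFact X b)

/-- The Gaussian multinomial `binom(n,I)_X` for `I = {i_1 < … < i_l}`. -/
def qMultinom {F : Type*} [Field F] (X : F) (n : ℕ) (I : Finset ℕ) : F :=
  (((I.sort (· ≤ ·)).zip ((I.sort (· ≤ ·)).tail ++ [n])).map
    (fun p => qBinom X p.2 p.1)).prod

/-- `gp(T) = T/(1-T)`. -/
def gp {F : Type*} [DivisionRing F] (T : F) : F := T / (1 - T)

/-- The field ℚ(X,Z). -/
abbrev F2 : Type := FractionRing (MvPolynomial (Fin 2) ℚ)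

def XX : F2 := algebraMap (MvPolynomial (Fin 2) ℚ) F2 (MvPolynomial.X 0)
def ZZ : F2 := algebraMap (MvPolynomial (Fin 2) ℚ) F2 (MvPolynomial.X 1)

lemma F2.algebraMap_injective :
    Function.Injective (algebraMap (MvPolynomial (Fin 2) ℚ) F2) :=
  IsFractionRing.injective _ _

lemma monomial_ne_one (a b : ℕ) (hab : a + b ≠ 0) : XX ^ a * ZZ ^ b ≠ 1 := by
  intro h
  have h1 : ((MvPolynomial.X 0 : MvPolynomial (Fin 2) ℚ) ^ a * MvPolynomial.X 1 ^ b) = 1 := by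
    apply F2.algebraMap_injective
    simpa [XX, ZZ, map_mul, map_pow] using h
  have h2 := congrArg (MvPolynomial.eval (fun _ => (2:ℚ))) h1
  simp only [map_mul, map_pow, MvPolynomial.eval_X, map_one, ← pow_add] at h2
  have : (1:ℚ) < 2 ^ (a + b) := one_lt_pow₀ (by norm_num) hab
  rw [h2] at this
  exact lt_irrefl _ this

lemma XX_ne_zero : XX ≠ 0 := by
  intro h
  have : (MvPolynomial.X 0 : MvPolynomial (Fin 2) ℚ) = 0 := by
    apply F2.algebraMap_injective; simpa [XX] using h
  exact MvPolynomial.X_ne_zero 0 this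

lemma XX_pow_ne_one (k : ℕ) (hk : k ≠ 0) : XX ^ k ≠ 1 := by
  have := monomial_ne_one k 0 (by simpa using hk)
  simpa using this

lemma one_sub_XX_pow_ne_zero (k : ℕ) (hk : k ≠ 0) : (1 : F2) - XX ^ k ≠ 0 := by
  intro h
  exact XX_pow_ne_one k hk (by linear_combination -h)

lemma one_sub_XXinv_pow_ne_zero (k : ℕ) (hk : k ≠ 0) : (1 : F2) - XX⁻¹ ^ k ≠ 0 := by
  intro h
  have h1 : XX⁻¹ ^ k = 1 := by linear_combination -h
  rw [inv_pow, inv_eq_one] at h1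
  exact XX_pow_ne_one k hk h1

lemma qFact_XX_ne_zero (k : ℕ) : qFact XX k ≠ 0 := by
  rw [qFact]
  exact Finset.prod_ne_zero_iff.2 fun i _ => one_sub_XX_pow_ne_zero _ (Nat.succ_ne_zero i)

lemma qFact_XXinv_ne_zero (k : ℕ) : qFact XX⁻¹ k ≠ 0 := by
  rw [qFact]
  exact Finset.prod_ne_zero_iff.2 fun i _ => one_sub_XXinv_pow_ne_zero _ (Nat.succ_ne_zero i)

lemma one_sub_XZ_pow_ne_zero (j m : ℕ) (hm : m ≠ 0) : (1 : F2) - ((XX ^ j * ZZ) ^ m) ≠ 0 := by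
  intro h
  have h1 : XX ^ (j * m) * ZZ ^ m = 1 := by
    rw [mul_pow, ← pow_mul] at h; linear_combination -h
  exact monomial_ne_one _ _ (by positivity) h1

lemma qPoch_XZ_ne_zero (j n : ℕ) : qPoch (XX ^ j * ZZ) XX n ≠ 0 := by
  rw [qPoch]
  refine Finset.prod_ne_zero_iff.2 fun i _ => ?_
  intro h
  have h1 : XX ^ (j + i) * ZZ ^ 1 = 1 := by
    rw [pow_add]; linear_combination -h
  exact monomial_ne_one _ _ (by positivity) h1

/-! ### qFact / qBinom basics -/

lemma qFact_zero {F : Type*} [CommRing F] (q : F) : qFact q 0 = 1 := by simp [qFact]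

lemma qFact_succ {F : Type*} [CommRing F] (q : F) (n : ℕ) :
    qFact q (n + 1) = qFact q n * (1 - q ^ (n + 1)) := by
  rw [qFact, qFact, Finset.prod_range_succ]

lemma qPoch_zero {F : Type*} [CommRing F] (A X : F) : qPoch A X 0 = 1 := by simp [qPoch]

lemma qPoch_succ {F : Type*} [CommRing F] (A X : F) (k : ℕ) :
    qPoch A X (k + 1) = qPoch A X k * (1 - A * X ^ k) := by
  rw [qPoch, qPoch, Finset.prod_range_succ]

lemma qPoch_add {F : Type*} [CommRing F] (A X : F) (a b : ℕ) :
    qPoch A X (a + b) = qPoch A X a * qPoch (A * X ^ a) X b := by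
  rw [qPoch, qPoch, qPoch, Finset.prod_range_add]
  congr 1
  refine Finset.prod_congr rfl fun i _ => ?_
  rw [pow_add]; ring

lemma qPoch_one_sub {F : Type*} [CommRing F] (A X : F) (k : ℕ) :
    qPoch A X (k + 1) = (1 - A) * qPoch (X * A) X k := by
  have := qPoch_add A X 1 k
  rw [add_comm 1 k] at this
  simpa [qPoch_succ, qPoch_zero, mul_comm] using this

lemma qBinom_pascal {F : Type*} [Field F] {q : F}
    (hq : ∀ k : ℕ, qFact q k ≠ 0)
    {n m : ℕ} (h1 : 1 ≤ m) (h2 : m ≤ n) :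
    qBinom q (n + 1) m = qBinom q n m + q ^ (n + 1 - m) * qBinom q n (m - 1) := by
  have e1 : n + 1 - m = (n - m) + 1 := by omega
  have e2 : n - (m - 1) = (n - m) + 1 := by omega
  have e3 : (m - 1) + 1 = m := by omega
  have hfm : qFact q m = qFact q (m - 1) * (1 - q ^ m) := by
    conv_lhs => rw [← e3, qFact_succ, e3]
  have h5 := hq n
  have h6 := hq (n - m)
  have h7 := hq (m - 1)
  have h8 : (1 : F) - q ^ ((n - m) + 1) ≠ 0 := by
    intro h; apply hq ((n - m) + 1); rw [qFact_succ, h, mul_zero]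
  have h9 : (1 : F) - q ^ m ≠ 0 := by
    intro h; apply hq m; rw [hfm, h, mul_zero]
  rw [qBinom, qBinom, qBinom, e2, e1, qFact_succ q n, qFact_succ q (n - m), hfm]
  have e5 : q ^ (n + 1) = q ^ ((n - m) + 1) * q ^ m := by
    rw [← pow_add]; congr 1; omega
  rw [e5]
  set a := q ^ ((n - m) + 1) with ha
  set b := q ^ m with hb
  field_simp
  ring

lemma qBinom_zero_right {F : Type*} [Field F] {q : F} (hq : ∀ k : ℕ, qFact q k ≠ 0) (n : ℕ) :
    qBinom q n 0 = 1 := by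
  rw [qBinom]
  simp [qFact_zero, div_self (hq n)]

lemma qBinom_self {F : Type*} [Field F] {q : F} (hq : ∀ k : ℕ, qFact q k ≠ 0) (n : ℕ) :
    qBinom q n n = 1 := by
  rw [qBinom]
  simp [qFact_zero, div_self (hq n)]

/-! ### The `b` coefficients -/

def bb (n m : ℕ) : F2 := qBinom XX⁻¹ n m * XX ^ (m * (n - m))

lemma bb_zero (n : ℕ) : bb n 0 = 1 := by
  simp [bb, qBinom_zero_right qFact_XXinv_ne_zero]

lemma bb_self (n : ℕ) : bb n n = 1 := by
  simp [bb, qBinom_self qFact_XXinv_ne_zero]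

lemma bb_pascal {n m : ℕ} (h1 : 1 ≤ m) (h2 : m ≤ n) :
    bb (n + 1) m = XX ^ m * bb n m + bb n (m - 1) := by
  have hp := qBinom_pascal (q := XX⁻¹) qFact_XXinv_ne_zero h1 h2
  rw [bb, bb, bb, hp, add_mul]
  congr 1
  · have eb : m * (n + 1 - m) = m * (n - m) + m := by
      have : n + 1 - m = (n - m) + 1 := by omega
      rw [this, Nat.mul_succ]
    rw [eb, pow_add]; ring
  · have ed : (m - 1) * (n - (m - 1)) = (m - 1) * (n + 1 - m) := by
      congr 1; omega
    have ee : ∀ k, m * k = k + (m - 1) * k := fun k => by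
      conv_lhs => rw [← Nat.sub_add_cancel h1]
      rw [Nat.succ_mul, add_comm]
    rw [ed, ee (n + 1 - m), pow_add, inv_pow]
    have hx : (XX ^ (n + 1 - m)) ≠ 0 := pow_ne_zero _ XX_ne_zero
    field_simp

/-! ### The key q-identity -/

theorem Gsum : ∀ n : ℕ, ∀ Y : F2,
    ∑ m ∈ Finset.range (n + 1), bb n m * Y ^ m * qPoch Y XX (n - m) = 1 := by
  intro n
  induction n with
  | zero =>
    intro Y
    simp [bb_zero, qPoch_zero]
  | succ n IH =>
    intro Y
    have hIH1 : ∑ i ∈ Finset.range n, bb n i * Y ^ i * qPoch Y XX (n - i) = 1 - Y ^ n := by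
      have h := IH Y
      rw [Finset.sum_range_succ] at h
      rw [Nat.sub_self, qPoch_zero, bb_self] at h
      linear_combination h
    have hIH2 : ∑ i ∈ Finset.range n,
        bb n (i + 1) * (XX * Y) ^ (i + 1) * qPoch (XX * Y) XX (n - (i + 1))
        = 1 - qPoch (XX * Y) XX n := by
      have h := IH (XX * Y)
      rw [Finset.sum_range_succ'] at h
      rw [bb_zero, Nat.sub_zero, pow_zero] at h
      linear_combination h
    rw [Finset.sum_range_succ, Finset.sum_range_succ']
    have hterm : ∀ i ∈ Finset.range n,
        bb (n + 1) (i + 1) * Y ^ (i + 1) * qPoch Y XX (n + 1 - (i + 1))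
        = (1 - Y) * (bb n (i + 1) * (XX * Y) ^ (i + 1) * qPoch (XX * Y) XX (n - (i + 1)))
          + Y * (bb n i * Y ^ i * qPoch Y XX (n - i)) := by
      intro i hi
      rw [Finset.mem_range] at hi
      have e1 : n + 1 - (i + 1) = (n - (i + 1)) + 1 := by omega
      have e2 : n - i = (n - (i + 1)) + 1 := by omega
      rw [bb_pascal (by omega) (by omega), Nat.add_sub_cancel, e1, e2,
        qPoch_one_sub Y XX (n - (i + 1))]
      rw [mul_pow]
      ring
    rw [Finset.sum_congr rfl hterm, Finset.sum_add_distrib, ← Finset.mul_sum, ← Finset.mul_sum,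
      hIH1, hIH2]
    rw [Nat.sub_self, qPoch_zero, bb_self, Nat.sub_zero, bb_zero, pow_zero,
      qPoch_one_sub Y XX n]
    ring

/-! ### List machinery -/

def Mlist {F : Type*} [Field F] (q : F) (l : List ℕ) (n : ℕ) : F :=
  ((l.zip (l.tail ++ [n])).map (fun p => qBinom q p.2 p.1)).prod

lemma qMultinom_eq_Mlist {F : Type*} [Field F] (q : F) (n : ℕ) (I : Finset ℕ) :
    qMultinom q n I = Mlist q (I.sort (· ≤ ·)) n := rfl

lemma Mlist_nil {F : Type*} [Field F] (q : F) (n : ℕ) : Mlist q [] n = 1 := rfl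

lemma Mlist_append {F : Type*} [Field F] (q : F) (l : List ℕ) (m n : ℕ) :
    Mlist q (l ++ [m]) n = Mlist q l m * qBinom q n m := by
  cases l with
  | nil => simp [Mlist]
  | cons a t =>
    rw [Mlist, Mlist]
    have htail : ((a :: t) ++ [m]).tail ++ [n] = ((a :: t).tail ++ [m]) ++ [n] := by simp
    rw [htail, List.zip_append (by simp)]
    simp [mul_comm]

def gapsFrom (c : ℕ) (l : List ℕ) (n : ℕ) : List ℕ :=
  ((c :: l).zip (l ++ [n])).map (fun p => p.2 - p.1)

lemma gapsFrom_nil (c n : ℕ) : gapsFrom c [] n = [n - c] := rfl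

lemma gapsFrom_cons (c a : ℕ) (l : List ℕ) (n : ℕ) :
    gapsFrom c (a :: l) n = (a - c) :: gapsFrom a l n := rfl

lemma gapsFrom_append (c : ℕ) (l : List ℕ) (m n : ℕ) :
    gapsFrom c (l ++ [m]) n = gapsFrom c l m ++ [n - m] := by
  rw [gapsFrom, gapsFrom]
  have h1 : c :: (l ++ [m]) = (c :: l) ++ [m] := rfl
  rw [h1, List.zip_append (by simp)]
  simp

lemma Mlist_eq_fact {F : Type*} [Field F] {q : F} (hq : ∀ k : ℕ, qFact q k ≠ 0)
    (l : List ℕ) (n : ℕ) :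
    Mlist q l n = qFact q n / ((gapsFrom 0 l n).map (qFact q)).prod := by
  induction l using List.reverseRecOn generalizing n with
  | nil => rw [Mlist_nil, gapsFrom_nil]; simp [div_self (hq n)]
  | append_singleton l m IH =>
    rw [Mlist_append, gapsFrom_append, IH m, qBinom, List.map_append, List.prod_append]
    have h1 : ((gapsFrom 0 l m).map (qFact q)).prod ≠ 0 := by
      apply List.prod_ne_zero
      intro h0
      rw [List.mem_map] at h0
      obtain ⟨y, -, hy⟩ := h0
      exact hq y hy
    have h2 := hq m
    have h3 := hq (n - m)
    simp only [List.map_cons, List.map_nil, List.prod_cons, List.prod_nil]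
    field_simp

lemma gaps_reverse_eq (n : ℕ) :
    ∀ (l : List ℕ) (c : ℕ), (∀ x ∈ l, c ≤ x) → (∀ x ∈ l, x ≤ n) → l.Pairwise (· ≤ ·) →
      gapsFrom 0 ((l.map (n - ·)).reverse) (n - c) = (gapsFrom c l n).reverse := by
  intro l
  induction l with
  | nil => intro c _ _ _; simp [gapsFrom_nil]
  | cons a t IH =>
    intro c hc hn hs
    have ha : a ≤ n := hn a (by simp)
    have hca : c ≤ a := hc a (by simp)
    have hrev : ((a :: t).map (n - ·)).reverse = ((t.map (n - ·)).reverse) ++ [n - a] := by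
      simp
    rw [hrev, gapsFrom_append, gapsFrom_cons, List.reverse_cons]
    rw [IH a (fun x hx => (List.pairwise_cons.mp hs).1 x hx) (fun x hx => hn x (by simp [hx]))
      (List.pairwise_cons.mp hs).2]
    congr 2
    omega

lemma sort_append_max {m : ℕ} {I : Finset ℕ} (h : ∀ x ∈ I, x < m) :
    (insert m I).sort (· ≤ ·) = I.sort (· ≤ ·) ++ [m] := by
  have hm : m ∉ I := fun hmI => lt_irrefl m (h m hmI)
  haveI : IsAntisymm ℕ (· ≤ ·) := ⟨fun _ _ => le_antisymm⟩
  refine (fun h1 h2 h3 => List.Perm.eq_of_pairwise' (r := (· ≤ ·)) h2 h3 h1) ?_ ?_ ?_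
  · have p1 := Finset.sort_perm_toList (insert m I) (· ≤ ·)
    have p2 := Finset.toList_insert hm
    have p3 := (Finset.sort_perm_toList I (· ≤ ·)).symm
    exact p1.trans (p2.trans ((p3.cons m).trans (List.perm_append_singleton m _).symm))
  · exact Finset.pairwise_sort _ _
  · rw [List.pairwise_append]
    refine ⟨Finset.pairwise_sort _ _, List.pairwise_singleton _ _, ?_⟩
    intro x hx y hy
    rw [List.mem_singleton] at hy
    subst hy
    have hx' : x ∈ I := by simpa using hx
    exact le_of_lt (h x hx')

lemma sort_image_reflect {n : ℕ} {I : Finset ℕ} (h : ∀ x ∈ I, x ≤ n) :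
    (I.image (n - ·)).sort (· ≤ ·) = ((I.sort (· ≤ ·)).map (n - ·)).reverse := by
  haveI : IsAntisymm ℕ (· ≤ ·) := ⟨fun _ _ => le_antisymm⟩
  have hinj : Set.InjOn (n - ·) ↑I := by
    intro a ha b hb hab
    have ha' := h a ha
    have hb' := h b hb
    simp only at hab
    omega
  refine (fun h1 h2 h3 => List.Perm.eq_of_pairwise' (r := (· ≤ ·)) h2 h3 h1) ?_ ?_ ?_
  · rw [← Multiset.coe_eq_coe]
    have e1 : ((I.image (n - ·)).sort (· ≤ ·) : Multiset ℕ) = (I.image (n - ·)).val :=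
      Finset.sort_eq _ _
    have e2 : (I.image (n - ·)).val = I.val.map (n - ·) := Finset.image_val_of_injOn hinj
    have e3 : (I.sort (· ≤ ·) : Multiset ℕ) = I.val := Finset.sort_eq _ _
    rw [e1, e2, ← e3]
    rw [Multiset.coe_reverse, ← Multiset.map_coe]
  · exact Finset.pairwise_sort _ _
  · rw [List.pairwise_reverse, List.pairwise_map]
    exact (Finset.pairwise_sort I (· ≤ ·)).imp fun hab => Nat.sub_le_sub_left hab n

lemma qMultinom_empty {F : Type*} [Field F] (q : F) (n : ℕ) : qMultinom q n ∅ = 1 := by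
  rw [qMultinom_eq_Mlist, Finset.sort_empty, Mlist_nil]

lemma qMultinom_insert_max {F : Type*} [Field F] (q : F) {n m : ℕ} {I : Finset ℕ}
    (h : ∀ x ∈ I, x < m) :
    qMultinom q n (insert m I) = qBinom q n m * qMultinom q m I := by
  rw [qMultinom_eq_Mlist, qMultinom_eq_Mlist, sort_append_max h, Mlist_append, mul_comm]

lemma qMultinom_reflect {F : Type*} [Field F] {q : F} (hq : ∀ k : ℕ, qFact q k ≠ 0)
    {n : ℕ} {I : Finset ℕ} (h : ∀ x ∈ I, x ≤ n) :
    qMultinom q n (I.image (n - ·)) = qMultinom q n I := by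
  rw [qMultinom_eq_Mlist, qMultinom_eq_Mlist, sort_image_reflect h,
    Mlist_eq_fact hq, Mlist_eq_fact hq]
  have hg := gaps_reverse_eq n (I.sort (· ≤ ·)) 0 (fun x _ => Nat.zero_le x)
    (fun x hx => h x (by simpa using hx)) (Finset.pairwise_sort _ _)
  rw [Nat.sub_zero] at hg
  rw [hg, List.map_reverse, List.prod_reverse]

lemma sum_powerset_Ico {β : Type*} [AddCommMonoid β] (f : Finset ℕ → β) :
    ∀ n : ℕ, ∑ I ∈ (Finset.Ico 1 n).powerset, f I
      = f ∅ + ∑ m ∈ Finset.Ico 1 n, ∑ I ∈ (Finset.Ico 1 m).powerset, f (insert m I) := by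
  intro n
  induction n with
  | zero => simp
  | succ n IH =>
    rcases Nat.eq_zero_or_pos n with rfl | hn
    · simp
    · have hIco : Finset.Ico 1 (n + 1) = insert n (Finset.Ico 1 n) := by
        ext x; simp only [Finset.mem_Ico, Finset.mem_insert]; omega
      have hnmem : n ∉ Finset.Ico 1 n := by simp
      rw [hIco, Finset.powerset_insert, Finset.sum_union, Finset.sum_image, IH,
        Finset.sum_insert hnmem]
      · abel
      · intro I hI J hJ hIJ
        rw [Finset.mem_coe, Finset.mem_powerset] at hI hJ
        have hnI : n ∉ I := fun hx => by simpa using hI hx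
        have hnJ : n ∉ J := fun hx => by simpa using hJ hx
        have := congrArg (Finset.erase · n) hIJ
        simpa [Finset.erase_insert hnI, Finset.erase_insert hnJ] using this
      · rw [Finset.disjoint_left]
        intro I hI hI2
        rw [Finset.mem_powerset] at hI
        rw [Finset.mem_image] at hI2
        obtain ⟨J, hJ, rfl⟩ := hI2
        have : n ∈ insert n J := Finset.mem_insert_self n J
        have := hI this
        simp at this

/-! ### Main strong induction -/

theorem Qsum : ∀ n : ℕ, 1 ≤ n → ∀ j : ℕ,
    ∑ I ∈ (Finset.Ico 1 n).powerset,
      qMultinom XX⁻¹ n I * ∏ i ∈ I, gp ((XX ^ (n - i) * (XX ^ j * ZZ)) ^ i)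
    = (1 - (XX ^ j * ZZ) ^ n) / qPoch (XX ^ j * ZZ) XX n := by
  intro n
  induction n using Nat.strong_induction_on with
  | _ n IH =>
    intro hn j
    rw [sum_powerset_Ico]
    have hinner : ∀ m ∈ Finset.Ico 1 n,
        (∑ I ∈ (Finset.Ico 1 m).powerset,
          qMultinom XX⁻¹ n (insert m I) *
            ∏ i ∈ insert m I, gp ((XX ^ (n - i) * (XX ^ j * ZZ)) ^ i))
        = bb n m * (XX ^ j * ZZ) ^ m * qPoch (XX ^ j * ZZ) XX (n - m)
            / qPoch (XX ^ j * ZZ) XX n := by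
      intro m hm
      rw [Finset.mem_Ico] at hm
      obtain ⟨hm1, hm2⟩ := hm
      have hstep : ∀ I ∈ (Finset.Ico 1 m).powerset,
          qMultinom XX⁻¹ n (insert m I) *
            ∏ i ∈ insert m I, gp ((XX ^ (n - i) * (XX ^ j * ZZ)) ^ i)
          = (qBinom XX⁻¹ n m * gp ((XX ^ (n - m) * (XX ^ j * ZZ)) ^ m)) *
            (qMultinom XX⁻¹ m I *
              ∏ i ∈ I, gp ((XX ^ (m - i) * (XX ^ (j + (n - m)) * ZZ)) ^ i)) := by
        intro I hI
        rw [Finset.mem_powerset] at hI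
        have hIm : ∀ x ∈ I, x < m := fun x hx => (Finset.mem_Ico.mp (hI hx)).2
        have hmI : m ∉ I := fun hx => lt_irrefl m (hIm m hx)
        rw [qMultinom_insert_max _ hIm, Finset.prod_insert hmI]
        have hprod : ∀ i ∈ I,
            gp ((XX ^ (n - i) * (XX ^ j * ZZ)) ^ i)
            = gp ((XX ^ (m - i) * (XX ^ (j + (n - m)) * ZZ)) ^ i) := by
          intro i hi
          have hlt := hIm i hi
          have harg : XX ^ (n - i) * (XX ^ j * ZZ) = XX ^ (m - i) * (XX ^ (j + (n - m)) * ZZ) := by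
            rw [← mul_assoc, ← pow_add, ← mul_assoc, ← pow_add]
            congr 2
            omega
          rw [harg]
        rw [Finset.prod_congr rfl hprod]
        ring
      rw [Finset.sum_congr rfl hstep, ← Finset.mul_sum,
        IH m hm2 hm1 (j + (n - m))]
      have hW : XX ^ (n - m) * (XX ^ j * ZZ) = XX ^ (j + (n - m)) * ZZ := by
        rw [← mul_assoc, ← pow_add]
        congr 2
        omega
      rw [hW, gp]
      have hW1 : (1 : F2) - (XX ^ (j + (n - m)) * ZZ) ^ m ≠ 0 :=
        one_sub_XZ_pow_ne_zero _ _ (by omega)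
      have hpm : qPoch (XX ^ (j + (n - m)) * ZZ) XX m ≠ 0 := qPoch_XZ_ne_zero _ _
      have hpn : qPoch (XX ^ j * ZZ) XX (n - m) ≠ 0 := qPoch_XZ_ne_zero _ _
      have hsplit : qPoch (XX ^ j * ZZ) XX n
          = qPoch (XX ^ j * ZZ) XX (n - m) * qPoch (XX ^ (j + (n - m)) * ZZ) XX m := by
        have h0 := qPoch_add (XX ^ j * ZZ) XX (n - m) m
        rw [show (n - m) + m = n from by omega] at h0
        rw [h0]
        congr 2
        rw [pow_add]
        ring
      have hWm : (XX ^ (j + (n - m)) * ZZ) ^ m = XX ^ (m * (n - m)) * (XX ^ j * ZZ) ^ m := by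
        rw [mul_pow, mul_pow, ← pow_mul, ← pow_mul, ← mul_assoc, ← pow_add]
        congr 2
        ring
      set W := XX ^ (j + (n - m)) * ZZ with hWdef
      set P2 := qPoch W XX m with hP2
      set P1 := qPoch (XX ^ j * ZZ) XX (n - m) with hP1
      have hc : W ^ m / (1 - W ^ m) * ((1 - W ^ m) / P2) = W ^ m / P2 := by
        field_simp
      rw [mul_assoc, hc, hWm, hsplit, bb]
      field_simp
    rw [Finset.sum_congr rfl hinner, qMultinom_empty, Finset.prod_empty, mul_one]
    have hG := Gsum n (XX ^ j * ZZ)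
    have hrange : Finset.range (n + 1) = insert 0 (insert n (Finset.Ico 1 n)) := by
      ext x
      simp only [Finset.mem_range, Finset.mem_insert, Finset.mem_Ico]
      omega
    rw [hrange, Finset.sum_insert (by simp [Finset.mem_Ico]; omega),
      Finset.sum_insert (by simp), bb_zero, bb_self, pow_zero, Nat.sub_zero, Nat.sub_self,
      qPoch_zero, one_mul, one_mul, mul_one] at hG
    rw [← Finset.sum_div]
    have hpn : qPoch (XX ^ j * ZZ) XX n ≠ 0 := qPoch_XZ_ne_zero _ _
    field_simp
    linear_combination hG

theorem multinomial_type_identity_A (n : ℕ) (hn : 1 ≤ n) :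
    (∑ I ∈ (Finset.Ico 1 n).powerset,
        qMultinom XX⁻¹ n I * ∏ i ∈ I, gp ((XX ^ i * ZZ) ^ (n - i))
      = (1 - ZZ ^ n) / qPoch ZZ XX n) ∧
    (∑ I ∈ (Finset.Ico 1 n).powerset,
        qMultinom XX⁻¹ n I * ∏ i ∈ I, gp ((XX ^ (n - i) * ZZ) ^ i)
      = (1 - ZZ ^ n) / qPoch ZZ XX n) := by
  have h2 : ∑ I ∈ (Finset.Ico 1 n).powerset,
      qMultinom XX⁻¹ n I * ∏ i ∈ I, gp ((XX ^ (n - i) * ZZ) ^ i)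
      = (1 - ZZ ^ n) / qPoch ZZ XX n := by
    have h := Qsum n hn 0
    simpa using h
  refine ⟨?_, h2⟩
  rw [← h2]
  refine Finset.sum_nbij' (i := fun I => I.image (n - ·)) (j := fun I => I.image (n - ·))
    ?_ ?_ ?_ ?_ ?_
  · intro I hI
    rw [Finset.mem_powerset] at hI ⊢
    intro x hx
    rw [Finset.mem_image] at hx
    obtain ⟨y, hy, rfl⟩ := hx
    have := Finset.mem_Ico.mp (hI hy)
    rw [Finset.mem_Ico]
    omega
  · intro I hI
    rw [Finset.mem_powerset] at hI ⊢
    intro x hx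
    rw [Finset.mem_image] at hx
    obtain ⟨y, hy, rfl⟩ := hx
    have := Finset.mem_Ico.mp (hI hy)
    rw [Finset.mem_Ico]
    omega
  · intro I hI
    rw [Finset.mem_powerset] at hI
    rw [Finset.image_image]
    have heq : Set.EqOn ((n - ·) ∘ (n - ·)) id ↑I := by
      intro x hx
      have := Finset.mem_Ico.mp (hI hx)
      simp only [Function.comp_apply, id_eq]
      omega
    rw [Finset.image_congr heq, Finset.image_id]
  · intro I hI
    rw [Finset.mem_powerset] at hI
    rw [Finset.image_image]
    have heq : Set.EqOn ((n - ·) ∘ (n - ·)) id ↑I := by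
      intro x hx
      have := Finset.mem_Ico.mp (hI hx)
      simp only [Function.comp_apply, id_eq]
      omega
    rw [Finset.image_congr heq, Finset.image_id]
  · intro I hI
    rw [Finset.mem_powerset] at hI
    have hbd : ∀ x ∈ I, x ≤ n := fun x hx => le_of_lt (Finset.mem_Ico.mp (hI hx)).2
    rw [qMultinom_reflect qFact_XXinv_ne_zero hbd]
    congr 1
    rw [Finset.prod_image]
    · refine Finset.prod_congr rfl fun i hi => ?_
      have := Finset.mem_Ico.mp (hI hi)
      have he : n - (n - i) = i := by omega
      rw [he]
    · intro a ha b hb hab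
      have := hbd a ha
      have := hbd b hb
      simp only at hab
      omega

end
end

section
/- For every natural number n ≥ 1 the following identities hold in the field ℚ(X,Z) of rational functions: ∑_{w ∈ S_n} X^{σ(w) − l(w)} · Z^{maj(w)} = ∑_{w ∈ S_n} X^{σ(w) − l(w)} · Z^{rmaj(w)} = ∏_{i=0}^{n−1} (1 − (X^{i}·Z)^{n−i}) / (1 − X^{i}·Z). -/
/-!
STATEMENT 10: Proposition `pro:S_n` — the joint distribution of `(σ - l, maj)` and
`(σ - l, rmaj)` on the symmetric group `S_n`, as identities in ℚ(X,Z).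
-/

noncomputable section

open scoped Classical

/-- The set `{1, …, n}`, as a type. -/
abbrev SBox (n : ℕ) : Finset ℕ := Finset.Icc 1 n

/-- The inversion number `l(w) = #{(i,j) : 1 ≤ i < j ≤ n, w(i) > w(j)}`
(the Coxeter length of `w`). -/
def slen (n : ℕ) (w : Equiv.Perm (SBox n)) : ℕ :=
  (Finset.univ.filter
    (fun p : SBox n × SBox n => p.1.1 < p.2.1 ∧ (w p.2).1 < (w p.1).1)).card

/-- The descent set `D(w) = {i ∈ {1,…,n-1} : w(i) > w(i+1)}`, as a subset of ℕ. -/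
def sdesc (n : ℕ) (w : Equiv.Perm (SBox n)) : Finset ℕ :=
  (Finset.univ.filter
    (fun a : SBox n => ∃ b : SBox n, b.1 = a.1 + 1 ∧ (w b).1 < (w a).1)).image
    (fun a => a.1)

/-- `σ(w) = ∑_{i ∈ D(w)} i·(n - i)`. -/
def ssigma (n : ℕ) (w : Equiv.Perm (SBox n)) : ℕ :=
  ∑ i ∈ sdesc n w, i * (n - i)

/-- The major index `maj(w) = ∑_{i ∈ D(w)} i`. -/
def smaj (n : ℕ) (w : Equiv.Perm (SBox n)) : ℕ :=
  ∑ i ∈ sdesc n w, i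

/-- The reverse major index `rmaj(w) = ∑_{i ∈ D(w)} (n - i)`. -/
def srmaj (n : ℕ) (w : Equiv.Perm (SBox n)) : ℕ :=
  ∑ i ∈ sdesc n w, (n - i)

namespace JD

lemma mem_box {m a : ℕ} (h : a ∈ SBox m) : 1 ≤ a ∧ a ≤ m := Finset.mem_Icc.1 h

lemma box_mem {m a : ℕ} (h1 : 1 ≤ a) (h2 : a ≤ m) : a ∈ SBox m := Finset.mem_Icc.2 ⟨h1, h2⟩

lemma mem_sdesc {m : ℕ} {w : Equiv.Perm (SBox m)} {d : ℕ} :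
    d ∈ sdesc m w ↔ ∃ a b : SBox m, a.1 = d ∧ b.1 = d + 1 ∧ (w b).1 < (w a).1 := by
  unfold sdesc
  simp only [Finset.mem_image, Finset.mem_filter, Finset.mem_univ, true_and]
  constructor
  · rintro ⟨a, ⟨b, hb, hlt⟩, rfl⟩
    exact ⟨a, b, rfl, hb, hlt⟩
  · rintro ⟨a, b, rfl, hb, hlt⟩
    exact ⟨a, ⟨b, hb, hlt⟩, rfl⟩

lemma sdesc_bounds {m : ℕ} {w : Equiv.Perm (SBox m)} {d : ℕ} (h : d ∈ sdesc m w) :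
    1 ≤ d ∧ d + 1 ≤ m := by
  obtain ⟨a, b, ha, hb, -⟩ := mem_sdesc.1 h
  have h1 := mem_box a.2
  have h2 := mem_box b.2
  omega

end JD

namespace JD

def lastE (n : ℕ) : SBox (n+1) := ⟨n+1, box_mem (by omega) le_rfl⟩
def oneE (n : ℕ) : SBox (n+1) := ⟨1, box_mem le_rfl (by omega)⟩

def rotFun (n : ℕ) (i : SBox (n+1)) : SBox (n+1) :=
  if h : i.1 = 1 then lastE n
  else ⟨i.1 - 1, box_mem (by have := mem_box i.2; omega) (by have := mem_box i.2; omega)⟩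

lemma rotFun_val {n : ℕ} (i : SBox (n+1)) :
    (rotFun n i).1 = if i.1 = 1 then n+1 else i.1 - 1 := by
  unfold rotFun
  split <;> simp_all [lastE]

lemma rotFun_inj (n : ℕ) : Function.Injective (rotFun n) := by
  intro a b hab
  have h1 := mem_box a.2
  have h2 := mem_box b.2
  have := congrArg Subtype.val hab
  rw [rotFun_val, rotFun_val] at this
  apply Subtype.ext
  split at this <;> split at this <;> omega

def rot (n : ℕ) : Equiv.Perm (SBox (n+1)) :=
  Equiv.ofBijective _ (Finite.injective_iff_bijective.1 (rotFun_inj n))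

lemma rot_apply_val {n : ℕ} (i : SBox (n+1)) :
    ((rot n) i).1 = if i.1 = 1 then n+1 else i.1 - 1 := rotFun_val i

lemma rot_pow_last {n k : ℕ} (hk : k ≤ n) :
    (((rot n)^k) (lastE n)).1 = n + 1 - k := by
  induction k with
  | zero => simp [lastE]
  | succ k ih =>
      have hk' : k ≤ n := by omega
      rw [pow_succ', Equiv.Perm.mul_apply, rot_apply_val, ih hk', if_neg (by omega)]
      omega

end JD

namespace JD

def incFun (n : ℕ) (u : Equiv.Perm (SBox n)) (i : SBox (n+1)) : SBox (n+1) :=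
  if h : i.1 ≤ n then
    ⟨(u ⟨i.1, box_mem (mem_box i.2).1 h⟩).1,
      box_mem (mem_box (u _).2).1 (le_trans (mem_box (u _).2).2 (Nat.le_succ n))⟩
  else lastE n

lemma incFun_le {n : ℕ} (u : Equiv.Perm (SBox n)) {i : SBox (n+1)} (h : i.1 ≤ n) :
    (incFun n u i).1 = (u ⟨i.1, box_mem (mem_box i.2).1 h⟩).1 := by
  unfold incFun
  rw [dif_pos h]

lemma incFun_gt {n : ℕ} (u : Equiv.Perm (SBox n)) {i : SBox (n+1)} (h : ¬ i.1 ≤ n) :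
    (incFun n u i).1 = n+1 := by
  unfold incFun
  rw [dif_neg h]
  rfl

lemma incFun_le_bound {n : ℕ} (u : Equiv.Perm (SBox n)) {i : SBox (n+1)} (h : i.1 ≤ n) :
    (incFun n u i).1 ≤ n := by
  rw [incFun_le u h]
  exact (mem_box (u _).2).2

lemma incFun_inj (n : ℕ) (u : Equiv.Perm (SBox n)) : Function.Injective (incFun n u) := by
  intro a b hab
  have h1 := mem_box a.2
  have h2 := mem_box b.2
  have hv := congrArg Subtype.val hab
  apply Subtype.ext
  by_cases ha : a.1 ≤ n <;> by_cases hb : b.1 ≤ n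
  · rw [incFun_le u ha, incFun_le u hb] at hv
    have h3 := congrArg Subtype.val (u.injective (Subtype.ext hv))
    exact h3
  · have h3 : (incFun n u a).1 ≤ n := incFun_le_bound u ha
    rw [incFun_gt u hb] at hv
    omega
  · have h3 : (incFun n u b).1 ≤ n := incFun_le_bound u hb
    rw [incFun_gt u ha] at hv
    omega
  · omega

def inc (n : ℕ) (u : Equiv.Perm (SBox n)) : Equiv.Perm (SBox (n+1)) :=
  Equiv.ofBijective _ (Finite.injective_iff_bijective.1 (incFun_inj n u))

lemma inc_le {n : ℕ} (u : Equiv.Perm (SBox n)) {i : SBox (n+1)} (h : i.1 ≤ n) :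
    ((inc n u) i).1 = (u ⟨i.1, box_mem (mem_box i.2).1 h⟩).1 := incFun_le u h

lemma inc_gt {n : ℕ} (u : Equiv.Perm (SBox n)) {i : SBox (n+1)} (h : ¬ i.1 ≤ n) :
    ((inc n u) i).1 = n+1 := incFun_gt u h

lemma inc_last {n : ℕ} (u : Equiv.Perm (SBox n)) : (inc n u) (lastE n) = lastE n :=
  Subtype.ext (incFun_gt u (by simp [lastE]))

lemma inc_le_bound {n : ℕ} (u : Equiv.Perm (SBox n)) {i : SBox (n+1)} (h : i.1 ≤ n) :
    ((inc n u) i).1 ≤ n := incFun_le_bound u h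

lemma sdesc_inc {n : ℕ} (u : Equiv.Perm (SBox n)) : sdesc (n+1) (inc n u) = sdesc n u := by
  ext d
  rw [mem_sdesc, mem_sdesc]
  constructor
  · rintro ⟨a, b, ha, hb, hlt⟩
    have hb2 := mem_box b.2
    have ha2 := mem_box a.2
    -- b.1 ≤ n, else contradiction
    by_cases hbn : b.1 ≤ n
    · have han : a.1 ≤ n := by omega
      rw [inc_le u hbn, inc_le u han] at hlt
      exact ⟨⟨a.1, box_mem (by omega) han⟩, ⟨b.1, box_mem (by omega) hbn⟩, ha, by simp [ha, hb], hlt⟩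
    · rw [inc_gt u hbn] at hlt
      have h4 : ((inc n u) a).1 ≤ n := inc_le_bound u (show (a.1:ℕ) ≤ n by omega)
      omega
  · rintro ⟨a, b, ha, hb, hlt⟩
    have hb2 := mem_box b.2
    have ha2 := mem_box a.2
    refine ⟨⟨a.1, box_mem (by omega) (by omega)⟩, ⟨b.1, box_mem (by omega) (by omega)⟩, ha, by simp [ha, hb], ?_⟩
    rw [inc_le u (show (b.1 : ℕ) ≤ n by omega), inc_le u (show (a.1 : ℕ) ≤ n by omega)]
    convert hlt using 2 <;> exact Subtype.ext rfl

lemma slen_inc {n : ℕ} (u : Equiv.Perm (SBox n)) : slen (n+1) (inc n u) = slen n u := by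
  unfold slen
  symm
  apply Finset.card_bij
    (i := fun p hp => ((⟨p.1.1, box_mem (mem_box p.1.2).1 (le_trans (mem_box p.1.2).2 (Nat.le_succ n))⟩ : SBox (n+1)),
                       (⟨p.2.1, box_mem (mem_box p.2.2).1 (le_trans (mem_box p.2.2).2 (Nat.le_succ n))⟩ : SBox (n+1))))
  · intro p hp
    rw [Finset.mem_filter] at hp ⊢
    obtain ⟨-, h1, h2⟩ := hp
    refine ⟨Finset.mem_univ _, h1, ?_⟩
    rw [inc_le u (show ((p.2.1 : ℕ)) ≤ n from (mem_box p.2.2).2),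
        inc_le u (show ((p.1.1 : ℕ)) ≤ n from (mem_box p.1.2).2)]
    convert h2 using 2 <;> exact Subtype.ext rfl
  · intro p hp q hq h
    have h1 := congrArg (fun r => (r.1.1 : ℕ)) h
    have h2 := congrArg (fun r => (r.2.1 : ℕ)) h
    simp only at h1 h2
    exact Prod.ext (Subtype.ext h1) (Subtype.ext h2)
  · intro q hq
    rw [Finset.mem_filter] at hq
    obtain ⟨-, h1, h2⟩ := hq
    -- both coords ≤ n
    have hq2 : q.2.1 ≤ n := by
      by_contra hgt
      rw [inc_gt u hgt] at h2
      have h3 := mem_box ((inc n u) q.1).2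
      omega
    have hq1 : q.1.1 ≤ n := by omega
    refine ⟨(⟨q.1.1, box_mem (mem_box q.1.2).1 hq1⟩, ⟨q.2.1, box_mem (mem_box q.2.2).1 hq2⟩), ?_, ?_⟩
    · rw [Finset.mem_filter]
      refine ⟨Finset.mem_univ _, h1, ?_⟩
      rw [inc_le u hq2, inc_le u hq1] at h2
      convert h2 using 2 <;> exact Subtype.ext rfl
    · exact Prod.ext (Subtype.ext rfl) (Subtype.ext rfl)

lemma smaj_inc {n : ℕ} (u : Equiv.Perm (SBox n)) : smaj (n+1) (inc n u) = smaj n u := by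
  unfold smaj
  rw [sdesc_inc]

lemma ssigma_inc {n : ℕ} (u : Equiv.Perm (SBox n)) :
    ssigma (n+1) (inc n u) = ssigma n u + smaj n u := by
  unfold ssigma smaj
  rw [sdesc_inc, ← Finset.sum_add_distrib]
  apply Finset.sum_congr rfl
  intro d hd
  have := sdesc_bounds hd
  have h1 : n + 1 - d = (n - d) + 1 := by omega
  rw [h1, Nat.mul_succ]

end JD

namespace JD

section Rot

variable {n : ℕ} (w : Equiv.Perm (SBox (n+1)))

/-- position of value 1 -/
def posOne : SBox (n+1) := w.symm (oneE n)

lemma w_posOne : w (posOne w) = oneE n := w.apply_symm_apply _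

lemma val_one_iff {i : SBox (n+1)} : (w i).1 = 1 ↔ i = posOne w := by
  constructor
  · intro h
    have : w i = oneE n := Subtype.ext h
    rw [← w_posOne w] at this
    exact w.injective this
  · rintro rfl
    rw [w_posOne]
    rfl

lemma val_ge_two {i : SBox (n+1)} (h : i ≠ posOne w) : 2 ≤ (w i).1 := by
  have h1 := (mem_box (w i).2).1
  have h2 : (w i).1 ≠ 1 := fun hc => h ((val_one_iff w).1 hc)
  omega

lemma rotw_val (i : SBox (n+1)) :
    ((rot n * w) i).1 = if (w i).1 = 1 then n+1 else (w i).1 - 1 := by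
  rw [Equiv.Perm.mul_apply, rot_apply_val]

lemma rotw_val_posOne : ((rot n * w) (posOne w)).1 = n+1 := by
  rw [rotw_val, if_pos (by rw [w_posOne]; rfl)]

lemma rotw_val_ne {i : SBox (n+1)} (h : i ≠ posOne w) :
    ((rot n * w) i).1 = (w i).1 - 1 := by
  rw [rotw_val, if_neg (by have := val_ge_two w h; omega)]

lemma posOne_not_desc : (posOne w).1 ∉ sdesc (n+1) w := by
  intro hc
  obtain ⟨a, b, ha, hb, hlt⟩ := mem_sdesc.1 hc
  have haP : a = posOne w := Subtype.ext ha
  rw [haP, w_posOne] at hlt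
  have := (mem_box (w b).2).1
  simp [oneE] at hlt
  omega

lemma pred_desc (hp : 2 ≤ (posOne w).1) : (posOne w).1 - 1 ∈ sdesc (n+1) w := by
  have hP := mem_box (posOne w).2
  refine mem_sdesc.2 ⟨⟨(posOne w).1 - 1, box_mem (by omega) (by omega)⟩, posOne w, rfl, by omega, ?_⟩
  rw [w_posOne]
  have hne : (⟨(posOne w).1 - 1, box_mem (by omega) (by omega)⟩ : SBox (n+1)) ≠ posOne w := by
    intro hc
    have := congrArg Subtype.val hc
    simp only at this
    omega
  have := val_ge_two w hne
  show 1 < _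
  omega

lemma sdesc_rot (hp : (posOne w).1 ≠ n+1) :
    sdesc (n+1) (rot n * w)
      = insert (posOne w).1 ((sdesc (n+1) w).erase ((posOne w).1 - 1)) := by
  have hP := mem_box (posOne w).2
  ext d
  rw [mem_sdesc, Finset.mem_insert, Finset.mem_erase, mem_sdesc]
  constructor
  · rintro ⟨a, b, ha, hb, hlt⟩
    by_cases hap : a = posOne w
    · left; rw [← ha, hap]
    · right
      by_cases hbp : b = posOne w
      · exfalso
        rw [hbp] at hlt
        have h1 : ((rot n * w) (posOne w)).1 = n+1 := rotw_val_posOne w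
        have h2 := (mem_box ((rot n * w) a).2).2
        omega
      · have h1 : ((rot n * w) a).1 = (w a).1 - 1 := rotw_val_ne w hap
        have h2 : ((rot n * w) b).1 = (w b).1 - 1 := rotw_val_ne w hbp
        have h3 := val_ge_two w hap
        have h4 := val_ge_two w hbp
        refine ⟨?_, a, b, ha, hb, by omega⟩
        -- d ≠ p - 1 : since b ≠ posOne, b.1 = d+1 ≠ p... d = p-1 → b.1 = p → b = posOne
        intro hc
        apply hbp
        apply Subtype.ext
        omega
  · rintro (rfl | ⟨hdp, a, b, ha, hb, hlt⟩)
    · -- d = p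
      have hmem : (posOne w).1 + 1 ∈ SBox (n+1) := box_mem (by omega) (by omega)
      refine ⟨posOne w, ⟨(posOne w).1 + 1, hmem⟩, rfl, rfl, ?_⟩
      have hbp : (⟨(posOne w).1 + 1, hmem⟩ : SBox (n+1)) ≠ posOne w := by
        intro hc
        have := congrArg Subtype.val hc
        simp only at this
        omega
      rw [rotw_val_posOne w, rotw_val_ne w hbp]
      have h5 := (mem_box (w (⟨(posOne w).1 + 1, hmem⟩ : SBox (n+1))).2).2
      omega
    · -- d ∈ D, d ≠ p-1
      have hap : a ≠ posOne w := by
        intro hc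
        rw [hc, w_posOne] at hlt
        have := (mem_box (w b).2).1
        simp only [oneE] at hlt
        omega
      have hbp : b ≠ posOne w := by
        intro hc
        -- b.1 = d+1 = p would give d = p-1
        apply hdp
        have := congrArg Subtype.val hc
        omega
      refine ⟨a, b, ha, hb, ?_⟩
      rw [rotw_val_ne w hap, rotw_val_ne w hbp]
      have h3 := val_ge_two w hap
      have h4 := val_ge_two w hbp
      omega

end Rot

end JD

namespace JD

section Rot2

variable {n : ℕ} (w : Equiv.Perm (SBox (n+1)))

lemma rot_sum (hp : (posOne w).1 ≠ n+1) (f : ℕ → ℕ) (hf : f 0 = 0) :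
    (∑ d ∈ sdesc (n+1) (rot n * w), f d) + f ((posOne w).1 - 1)
      = (∑ d ∈ sdesc (n+1) w, f d) + f ((posOne w).1) := by
  have hP := mem_box (posOne w).2
  rw [sdesc_rot w hp]
  have hnotmem : (posOne w).1 ∉ (sdesc (n+1) w).erase ((posOne w).1 - 1) := by
    intro hc
    exact posOne_not_desc w (Finset.mem_of_mem_erase hc)
  rw [Finset.sum_insert hnotmem]
  by_cases hc : 2 ≤ (posOne w).1
  · rw [← Finset.add_sum_erase _ f (pred_desc w hc)]
    ring
  · have h1 : (posOne w).1 = 1 := by omega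
    rw [h1]
    have h0 : (0:ℕ) ∉ sdesc (n+1) w := fun hc' => by have := sdesc_bounds hc'; omega
    rw [show (1:ℕ) - 1 = 0 from rfl, Finset.erase_eq_of_notMem h0, hf]
    ring

lemma smaj_rot (hp : (posOne w).1 ≠ n+1) :
    smaj (n+1) (rot n * w) = smaj (n+1) w + 1 := by
  have hP := mem_box (posOne w).2
  have := rot_sum w hp id rfl
  unfold smaj
  simp only [id] at this
  omega

lemma ssigma_rot_eq (hp : (posOne w).1 ≠ n+1) :
    ssigma (n+1) (rot n * w) + ((posOne w).1 - 1) * (n+1 - ((posOne w).1 - 1))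
      = ssigma (n+1) w + (posOne w).1 * (n+1 - (posOne w).1) :=
  rot_sum w hp (fun d => d * (n+1-d)) (Nat.zero_mul _)

/-- the common part of the two inversion sets -/
def commonInv : Finset (SBox (n+1) × SBox (n+1)) :=
  Finset.univ.filter
    (fun q : SBox (n+1) × SBox (n+1) =>
      (q.1.1 < q.2.1 ∧ (w q.2).1 < (w q.1).1) ∧ ¬ q.2 = posOne w)

lemma slen_w_split :
    slen (n+1) w = ((posOne w).1 - 1) + (commonInv w).card := by
  classical
  unfold slen
  rw [← Finset.card_filter_add_card_filter_not (fun q : SBox (n+1) × SBox (n+1) => q.2 = posOne w)]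
  congr 1
  · -- pairs ending at posOne : card = p - 1
    rw [Finset.filter_filter]
    have hset : Finset.univ.filter
        (fun q : SBox (n+1) × SBox (n+1) =>
          (q.1.1 < q.2.1 ∧ (w q.2).1 < (w q.1).1) ∧ q.2 = posOne w)
        = Finset.univ.filter
        (fun q : SBox (n+1) × SBox (n+1) => q.1.1 < (posOne w).1 ∧ q.2 = posOne w) := by
      ext q
      simp only [Finset.mem_filter, Finset.mem_univ, true_and]
      constructor
      · rintro ⟨⟨h1, h2⟩, h3⟩
        exact ⟨by rw [← h3]; exact h1, h3⟩
      · rintro ⟨h1, h3⟩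
        have hq1 : q.1 ≠ posOne w := by
          intro hc
          rw [hc] at h1
          omega
        have h4 := val_ge_two w hq1
        refine ⟨⟨by rw [h3]; exact h1, ?_⟩, h3⟩
        rw [h3, w_posOne]
        show 1 < _
        omega
    rw [hset]
    -- card = p - 1 via bijection with Ico 1 p
    rw [show ((posOne w).1 - 1) = (Finset.Ico 1 (posOne w).1).card by rw [Nat.card_Ico]]
    apply Finset.card_bij (i := fun q _ => (q.1.1 : ℕ))
    · intro q hq
      rw [Finset.mem_filter] at hq
      have := (mem_box q.1.2).1
      rw [Finset.mem_Ico]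
      exact ⟨this, hq.2.1⟩
    · intro q1 hq1 q2 hq2 h
      rw [Finset.mem_filter] at hq1 hq2
      exact Prod.ext (Subtype.ext h) (by rw [hq1.2.2, hq2.2.2])
    · intro x hx
      rw [Finset.mem_Ico] at hx
      have hP := mem_box (posOne w).2
      refine ⟨(⟨x, box_mem hx.1 (by omega)⟩, posOne w), ?_, rfl⟩
      rw [Finset.mem_filter]
      exact ⟨Finset.mem_univ _, hx.2, rfl⟩
  · rw [Finset.filter_filter]
    rfl

lemma slen_rotw_split (hp : (posOne w).1 ≠ n+1) :
    slen (n+1) (rot n * w) = (n+1 - (posOne w).1) + (commonInv w).card := by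
  classical
  have hP := mem_box (posOne w).2
  unfold slen
  rw [← Finset.card_filter_add_card_filter_not (fun q : SBox (n+1) × SBox (n+1) => q.1 = posOne w)]
  congr 1
  · -- pairs starting at posOne : card = n+1-p
    rw [Finset.filter_filter]
    have hset : Finset.univ.filter
        (fun q : SBox (n+1) × SBox (n+1) =>
          (q.1.1 < q.2.1 ∧ ((rot n * w) q.2).1 < ((rot n * w) q.1).1) ∧ q.1 = posOne w)
        = Finset.univ.filter
        (fun q : SBox (n+1) × SBox (n+1) => (posOne w).1 < q.2.1 ∧ q.1 = posOne w) := by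
      ext q
      simp only [Finset.mem_filter, Finset.mem_univ, true_and]
      constructor
      · rintro ⟨⟨h1, h2⟩, h3⟩
        exact ⟨by rw [← h3]; exact h1, h3⟩
      · rintro ⟨h1, h3⟩
        have hq2 : q.2 ≠ posOne w := by
          intro hc
          rw [hc] at h1
          omega
        refine ⟨⟨by rw [h3]; exact h1, ?_⟩, h3⟩
        rw [h3, rotw_val_posOne, rotw_val_ne w hq2]
        have h4 := (mem_box (w q.2).2).2
        have h5 := val_ge_two w hq2
        omega
    rw [hset]
    rw [show (n+1 - (posOne w).1) = (Finset.Ioc (posOne w).1 (n+1)).card by rw [Nat.card_Ioc]]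
    apply Finset.card_bij (i := fun q _ => (q.2.1 : ℕ))
    · intro q hq
      rw [Finset.mem_filter] at hq
      have := (mem_box q.2.2).2
      rw [Finset.mem_Ioc]
      exact ⟨hq.2.1, this⟩
    · intro q1 hq1 q2 hq2 h
      rw [Finset.mem_filter] at hq1 hq2
      exact Prod.ext (by rw [hq1.2.2, hq2.2.2]) (Subtype.ext h)
    · intro x hx
      rw [Finset.mem_Ioc] at hx
      refine ⟨(posOne w, ⟨x, box_mem (by omega) hx.2⟩), ?_, rfl⟩
      rw [Finset.mem_filter]
      exact ⟨Finset.mem_univ _, hx.1, rfl⟩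
  · rw [Finset.filter_filter]
    -- remaining parts agree
    congr 1
    ext q
    simp only [Finset.mem_filter, Finset.mem_univ, true_and]
    unfold commonInv
    rw [Finset.mem_filter]
    simp only [Finset.mem_univ, true_and]
    constructor
    · rintro ⟨⟨h1, h2⟩, h3⟩
      have hq2 : q.2 ≠ posOne w := by
        intro hc
        rw [hc, rotw_val_posOne] at h2
        have := (mem_box ((rot n * w) q.1).2).2
        omega
      rw [rotw_val_ne w hq2, rotw_val_ne w h3] at h2
      have h4 := val_ge_two w hq2
      have h5 := val_ge_two w h3
      exact ⟨⟨h1, by omega⟩, hq2⟩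
    · rintro ⟨⟨h1, h2⟩, h3⟩
      have hq1 : q.1 ≠ posOne w := by
        intro hc
        rw [hc, w_posOne] at h2
        have := (mem_box (w q.2).2).1
        simp only [oneE] at h2
        omega
      refine ⟨⟨h1, ?_⟩, hq1⟩
      rw [rotw_val_ne w hq1, rotw_val_ne w h3]
      have h4 := val_ge_two w hq1
      have h5 := val_ge_two w h3
      omega

lemma sigma_sub_len_rot (hp : (posOne w).1 ≠ n+1) :
    (ssigma (n+1) (rot n * w) : ℤ) - slen (n+1) (rot n * w)
      = (ssigma (n+1) w : ℤ) - slen (n+1) w := by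
  have hP := mem_box (posOne w).2
  have e1 := ssigma_rot_eq w hp
  have e2 := slen_w_split w
  have e3 := slen_rotw_split w hp
  set p := (posOne w).1 with hpdef
  have hp1 : 1 ≤ p := hP.1
  have hp2 : p ≤ n := by omega
  zify [show 1 ≤ p from hp1, show p - 1 ≤ n+1 by omega, show p ≤ n+1 by omega] at e1 e2 e3
  rw [e2, e3]
  linear_combination e1

end Rot2

end JD

namespace JD

section Phi

variable {n : ℕ}

lemma phi_last (u : Equiv.Perm (SBox n)) {k : ℕ} (hk : k ≤ n) :
    (((rot n)^k * inc n u) (lastE n)).1 = n + 1 - k := by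
  rw [Equiv.Perm.mul_apply, inc_last, rot_pow_last hk]

lemma phi_posOne_ne (u : Equiv.Perm (SBox n)) {k : ℕ} (hk : k ≤ n - 1) (hn : 1 ≤ n) :
    (posOne ((rot n)^k * inc n u)).1 ≠ n+1 := by
  intro hc
  have h1 : posOne ((rot n)^k * inc n u) = lastE n := Subtype.ext hc
  have h2 := w_posOne ((rot n)^k * inc n u)
  rw [h1] at h2
  have h3 := congrArg Subtype.val h2
  rw [phi_last u (by omega)] at h3
  simp only [oneE] at h3
  omega

lemma phi_smaj (u : Equiv.Perm (SBox n)) {k : ℕ} (hk : k ≤ n) :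
    smaj (n+1) ((rot n)^k * inc n u) = smaj n u + k := by
  induction k with
  | zero => simp [smaj_inc]
  | succ k ih =>
      have hk' : k ≤ n := by omega
      have h1 : (rot n)^(k+1) * inc n u = rot n * ((rot n)^k * inc n u) := by
        rw [pow_succ', mul_assoc]
      rw [h1, smaj_rot _ (phi_posOne_ne u (by omega) (by omega)), ih hk']
      omega

lemma phi_sigma_len (u : Equiv.Perm (SBox n)) {k : ℕ} (hk : k ≤ n) :
    (ssigma (n+1) ((rot n)^k * inc n u) : ℤ) - slen (n+1) ((rot n)^k * inc n u)
      = (ssigma n u : ℤ) + smaj n u - slen n u := by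
  induction k with
  | zero =>
      simp only [pow_zero, one_mul, ssigma_inc, slen_inc]
      push_cast
      ring
  | succ k ih =>
      have hk' : k ≤ n := by omega
      have h1 : (rot n)^(k+1) * inc n u = rot n * ((rot n)^k * inc n u) := by
        rw [pow_succ', mul_assoc]
      rw [h1, sigma_sub_len_rot _ (phi_posOne_ne u (by omega) (by omega))]
      exact ih hk'

lemma inc_inj : Function.Injective (inc n) := by
  intro u u' h
  apply Equiv.ext
  intro i
  have hi := mem_box i.2
  have hle : ((⟨i.1, box_mem hi.1 (le_trans hi.2 (Nat.le_succ n))⟩ : SBox (n+1)).1) ≤ n := hi.2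
  have h1 : ((inc n u) ⟨i.1, box_mem hi.1 (le_trans hi.2 (Nat.le_succ n))⟩).1
      = ((inc n u') ⟨i.1, box_mem hi.1 (le_trans hi.2 (Nat.le_succ n))⟩).1 := by rw [h]
  rw [inc_le u hle, inc_le u' hle] at h1
  have h2 : (⟨(⟨i.1, box_mem hi.1 (le_trans hi.2 (Nat.le_succ n))⟩ : SBox (n+1)).1,
      box_mem (mem_box (⟨i.1, box_mem hi.1 (le_trans hi.2 (Nat.le_succ n))⟩ : SBox (n+1)).2).1 hle⟩ : SBox n) = i :=
    Subtype.ext rfl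
  rw [h2] at h1
  exact Subtype.ext h1

def phi (p : Equiv.Perm (SBox n) × Fin (n+1)) : Equiv.Perm (SBox (n+1)) :=
  (rot n)^(p.2 : ℕ) * inc n p.1

lemma phi_bijective : Function.Bijective (phi (n := n)) := by
  rw [Fintype.bijective_iff_injective_and_card]
  constructor
  · intro p q h
    have hlast : (phi p (lastE n)).1 = (phi q (lastE n)).1 := by rw [h]
    have hk2 : (p.2 : ℕ) ≤ n := Nat.lt_succ_iff.mp p.2.isLt
    have hq2 : (q.2 : ℕ) ≤ n := Nat.lt_succ_iff.mp q.2.isLt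
    unfold phi at hlast
    rw [phi_last p.1 hk2, phi_last q.1 hq2] at hlast
    have hkk : (p.2 : ℕ) = (q.2 : ℕ) := by omega
    have hk : p.2 = q.2 := Fin.ext hkk
    unfold phi at h
    rw [hkk] at h
    have := mul_left_cancel h
    exact Prod.ext (inc_inj this) hk
  · rw [Fintype.card_prod, Fintype.card_perm, Fintype.card_perm, Fintype.card_fin]
    have hc1 : Fintype.card (SBox n) = n := by
      rw [Fintype.card_coe, Nat.card_Icc]
      omega
    have hc2 : Fintype.card (SBox (n+1)) = n+1 := by
      rw [Fintype.card_coe, Nat.card_Icc]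
      omega
    rw [hc1, hc2, Nat.factorial_succ, mul_comm]

end Phi

end JD

namespace JD

lemma sdesc_one (w : Equiv.Perm (SBox 1)) : sdesc 1 w = ∅ := by
  ext d
  simp only [Finset.notMem_empty, iff_false]
  intro hc
  have := sdesc_bounds hc
  omega

lemma slen_one (w : Equiv.Perm (SBox 1)) : slen 1 w = 0 := by
  unfold slen
  rw [Finset.card_eq_zero, Finset.filter_eq_empty_iff]
  intro q _
  have h1 := mem_box q.1.2
  have h2 := mem_box q.2.2
  intro hc
  omega

lemma key {K : Type*} [Field K] (n : ℕ) (hn : 1 ≤ n) :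
    ∀ x z : K, x ≠ 0 →
      ∑ w : Equiv.Perm (SBox n), x ^ ((ssigma n w : ℤ) - (slen n w : ℤ)) * z ^ smaj n w
        = ∏ i ∈ Finset.range n, ∑ c ∈ Finset.range (n - i), (x ^ i * z) ^ c := by
  induction n, hn using Nat.le_induction with
  | base =>
      intro x z hx
      have hterm : ∀ w : Equiv.Perm (SBox 1),
          x ^ ((ssigma 1 w : ℤ) - (slen 1 w : ℤ)) * z ^ smaj 1 w = 1 := by
        intro w
        unfold ssigma smaj
        rw [sdesc_one, slen_one]
        simp
      rw [Finset.sum_congr rfl (fun w _ => hterm w), Finset.sum_const]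
      have hcard : Fintype.card (Equiv.Perm (SBox 1)) = 1 := by
        rw [Fintype.card_perm]
        rw [show Fintype.card (SBox 1) = 1 by rw [Fintype.card_coe, Nat.card_Icc]]
        rfl
      simp [Finset.card_univ, hcard]
  | succ n hn ih =>
      intro x z hx
      -- reindex by phi
      rw [← Fintype.sum_bijective phi phi_bijective _ _ (fun p => rfl)]
      have hterm : ∀ p : Equiv.Perm (SBox n) × Fin (n+1),
          x ^ ((ssigma (n+1) (phi p) : ℤ) - (slen (n+1) (phi p) : ℤ)) * z ^ smaj (n+1) (phi p)
            = (x ^ ((ssigma n p.1 : ℤ) - (slen n p.1 : ℤ)) * (x*z) ^ smaj n p.1) * z ^ (p.2 : ℕ) := by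
        intro p
        have hk : (p.2 : ℕ) ≤ n := Nat.lt_succ_iff.mp p.2.isLt
        have h1 : smaj (n+1) (phi p) = smaj n p.1 + (p.2 : ℕ) := phi_smaj p.1 hk
        have h2 : (ssigma (n+1) (phi p) : ℤ) - slen (n+1) (phi p)
            = (ssigma n p.1 : ℤ) + smaj n p.1 - slen n p.1 := phi_sigma_len p.1 hk
        rw [h1, h2]
        have h3 : ((ssigma n p.1 : ℤ) + smaj n p.1 - slen n p.1)
            = ((ssigma n p.1 : ℤ) - slen n p.1) + (smaj n p.1 : ℤ) := by ring
        rw [h3, zpow_add₀ hx, zpow_natCast]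
        rw [pow_add, mul_pow]
        ring
      rw [Fintype.sum_congr _ _ hterm]
      rw [Fintype.sum_prod_type]
      have hsplit : ∀ u : Equiv.Perm (SBox n),
          ∑ k : Fin (n+1), (x ^ ((ssigma n u : ℤ) - (slen n u : ℤ)) * (x*z) ^ smaj n u) * z ^ (k : ℕ)
            = (x ^ ((ssigma n u : ℤ) - (slen n u : ℤ)) * (x*z) ^ smaj n u) * ∑ c ∈ Finset.range (n+1), z ^ c := by
        intro u
        rw [← Finset.mul_sum]
        congr 1
        exact Fin.sum_univ_eq_sum_range _ _
      rw [Fintype.sum_congr _ _ hsplit, ← Finset.sum_mul, ih x (x*z) hx]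
      rw [Finset.prod_range_succ']
      congr 1
      · apply Finset.prod_congr rfl
        intro i _
        have : n + 1 - (i+1) = n - i := by omega
        rw [this]
        apply Finset.sum_congr rfl
        intro c _
        congr 1
        ring
      · simp

end JD

namespace JD

section Rev

variable {m : ℕ}

def revFun (m : ℕ) (i : SBox m) : SBox m :=
  ⟨m + 1 - i.1, box_mem (by have := mem_box i.2; omega) (by have := mem_box i.2; omega)⟩

lemma revFun_invol (m : ℕ) : Function.Involutive (revFun m) := by
  intro i
  have := mem_box i.2
  apply Subtype.ext
  show m + 1 - (m + 1 - i.1) = i.1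
  omega

lemma revFun_val (i : SBox m) : (revFun m i).1 = m + 1 - i.1 := rfl

def revP (m : ℕ) : Equiv.Perm (SBox m) := (revFun_invol m).toPerm

lemma revP_apply (i : SBox m) : revP m i = revFun m i := rfl

def conj (m : ℕ) (w : Equiv.Perm (SBox m)) : Equiv.Perm (SBox m) :=
  revP m * w * revP m

lemma conj_apply (w : Equiv.Perm (SBox m)) (i : SBox m) :
    conj m w i = revFun m (w (revFun m i)) := rfl

lemma conj_invol (m : ℕ) : Function.Involutive (conj m) := by
  intro w
  apply Equiv.ext
  intro i
  rw [conj_apply, conj_apply, revFun_invol, revFun_invol]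

lemma mem_sdesc_conj {w : Equiv.Perm (SBox m)} {d : ℕ} (h : d ∈ sdesc m w) :
    m - d ∈ sdesc m (conj m w) := by
  obtain ⟨a, b, ha, hb, hlt⟩ := mem_sdesc.1 h
  have hbd := sdesc_bounds h
  have ha2 := mem_box a.2
  have hb2 := mem_box b.2
  refine mem_sdesc.2 ⟨revFun m b, revFun m a, ?_, ?_, ?_⟩
  · show m + 1 - b.1 = m - d
    omega
  · show m + 1 - a.1 = (m - d) + 1
    omega
  · rw [← revP_apply, ← revP_apply]
    have e1 : conj m w ((revP m) a) = revFun m (w a) := by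
      rw [conj_apply, revP_apply, revFun_invol]
    have e2 : conj m w ((revP m) b) = revFun m (w b) := by
      rw [conj_apply, revP_apply, revFun_invol]
    rw [e1, e2]
    show m + 1 - (w a).1 < m + 1 - (w b).1
    have := mem_box (w a).2
    have := mem_box (w b).2
    omega

lemma sum_sdesc_conj {M : Type*} [AddCommMonoid M] (w : Equiv.Perm (SBox m)) (f : ℕ → M) :
    ∑ d ∈ sdesc m (conj m w), f d = ∑ d ∈ sdesc m w, f (m - d) := by
  apply Finset.sum_nbij' (i := fun d => m - d) (j := fun d => m - d)
  · intro d hd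
    have := conj_invol m w
    have h2 := mem_sdesc_conj hd
    rwa [this] at h2
  · intro d hd
    exact mem_sdesc_conj hd
  · intro d hd
    have := sdesc_bounds hd
    omega
  · intro d hd
    have := sdesc_bounds hd
    omega
  · intro d hd
    have := sdesc_bounds hd
    congr 1
    omega

lemma smaj_conj (w : Equiv.Perm (SBox m)) : smaj m (conj m w) = srmaj m w :=
  sum_sdesc_conj w id

lemma ssigma_conj (w : Equiv.Perm (SBox m)) : ssigma m (conj m w) = ssigma m w := by
  unfold ssigma
  rw [sum_sdesc_conj w (fun d => d * (m - d))]
  apply Finset.sum_congr rfl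
  intro d hd
  have := sdesc_bounds hd
  have h1 : m - (m - d) = d := by omega
  rw [h1, mul_comm]

lemma slen_conj (w : Equiv.Perm (SBox m)) : slen m (conj m w) = slen m w := by
  unfold slen
  apply Finset.card_bij (i := fun q _ => (revFun m q.2, revFun m q.1))
  · intro q hq
    rw [Finset.mem_filter] at hq ⊢
    obtain ⟨-, h1, h2⟩ := hq
    have ha2 := mem_box q.1.2
    have hb2 := mem_box q.2.2
    refine ⟨Finset.mem_univ _, ?_, ?_⟩
    · rw [revFun_val, revFun_val]
      omega
    · show (w (revFun m q.1)).1 < (w (revFun m q.2)).1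
      rw [conj_apply, conj_apply, revFun_val, revFun_val] at h2
      have hx1 := mem_box (w (revFun m q.1)).2
      have hx2 := mem_box (w (revFun m q.2)).2
      omega
  · intro q1 hq1 q2 hq2 h
    have h1 := congrArg Prod.fst h
    have h2 := congrArg Prod.snd h
    simp only at h1 h2
    have hinj := (revFun_invol m).injective
    exact Prod.ext (hinj h2) (hinj h1)
  · intro q hq
    rw [Finset.mem_filter] at hq
    obtain ⟨-, h1, h2⟩ := hq
    refine ⟨(revFun m q.2, revFun m q.1), ?_, ?_⟩
    · rw [Finset.mem_filter]
      have ha2 := mem_box q.1.2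
      have hb2 := mem_box q.2.2
      refine ⟨Finset.mem_univ _, ?_, ?_⟩
      · rw [revFun_val, revFun_val]
        omega
      · show (conj m w (revFun m q.1)).1 < (conj m w (revFun m q.2)).1
        rw [conj_apply, conj_apply, revFun_invol, revFun_invol, revFun_val, revFun_val]
        have := mem_box (w q.1).2
        have := mem_box (w q.2).2
        omega
    · exact Prod.ext ((revFun_invol m) q.1) ((revFun_invol m) q.2)

end Rev

end JD

namespace JD

lemma srmaj_sum_eq {K : Type*} [Field K] (n : ℕ) (x z : K) :
    ∑ w : Equiv.Perm (SBox n), x ^ ((ssigma n w : ℤ) - (slen n w : ℤ)) * z ^ srmaj n w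
      = ∑ w : Equiv.Perm (SBox n), x ^ ((ssigma n w : ℤ) - (slen n w : ℤ)) * z ^ smaj n w := by
  apply Fintype.sum_bijective (conj n) (Function.Involutive.bijective (conj_invol n))
  intro w
  rw [ssigma_conj, slen_conj, smaj_conj]

end JD

namespace JD

lemma XX_ne_zero : XX ≠ 0 := by
  intro h
  have hinj := IsFractionRing.injective (MvPolynomial (Fin 2) ℚ) F2
  have h2 : (MvPolynomial.X 0 : MvPolynomial (Fin 2) ℚ) = 0 := by
    apply hinj
    rw [map_zero]
    exact h
  exact absurd h2 (MvPolynomial.X_ne_zero (0 : Fin 2))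

lemma XZ_ne_one (i : ℕ) : XX ^ i * ZZ ≠ 1 := by
  intro h
  have hinj := IsFractionRing.injective (MvPolynomial (Fin 2) ℚ) F2
  have h2 : (MvPolynomial.X 0 : MvPolynomial (Fin 2) ℚ) ^ i * MvPolynomial.X 1 = 1 := by
    apply hinj
    rw [map_mul, map_pow, map_one]
    exact h
  have h3 := congrArg (MvPolynomial.eval (fun _ => (0:ℚ))) h2
  simp only [map_mul, map_pow, MvPolynomial.eval_X, map_one, mul_zero] at h3
  norm_num at h3

lemma prod_transform (n : ℕ) :
    ∏ i ∈ Finset.range n, ∑ c ∈ Finset.range (n - i), (XX ^ i * ZZ) ^ c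
      = ∏ i ∈ Finset.range n, (1 - (XX ^ i * ZZ) ^ (n - i)) / (1 - XX ^ i * ZZ) := by
  apply Finset.prod_congr rfl
  intro i _
  have h1 : XX ^ i * ZZ ≠ 1 := XZ_ne_one i
  have hne1 : XX ^ i * ZZ - 1 ≠ 0 := sub_ne_zero.2 h1
  have hne2 : (1 : F2) - XX ^ i * ZZ ≠ 0 := sub_ne_zero.2 (Ne.symm h1)
  rw [geom_sum_eq h1, div_eq_div_iff hne1 hne2]
  ring

end JD

theorem joint_distribution_type_A (n : ℕ) (hn : 1 ≤ n) :
    (∑ w : Equiv.Perm (SBox n),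
        XX ^ ((ssigma n w : ℤ) - (slen n w : ℤ)) * ZZ ^ smaj n w
      = ∏ i ∈ Finset.range n,
          (1 - (XX ^ i * ZZ) ^ (n - i)) / (1 - XX ^ i * ZZ)) ∧
    (∑ w : Equiv.Perm (SBox n),
        XX ^ ((ssigma n w : ℤ) - (slen n w : ℤ)) * ZZ ^ srmaj n w
      = ∏ i ∈ Finset.range n,
          (1 - (XX ^ i * ZZ) ^ (n - i)) / (1 - XX ^ i * ZZ)) := by
  have hkey := JD.key n hn XX ZZ JD.XX_ne_zero
  constructor
  · rw [hkey, JD.prod_transform]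
  · rw [JD.srmaj_sum_eq, hkey, JD.prod_transform]


end
end

section
/- Let q be a prime power, F_q the finite field with q elements, n ≥ 1, δ ∈ {0,1} and i ∈ {0,1,…,n}. Then the number of alternating (2n+δ) × (2n+δ) matrices x over F_q (i.e. xᵀ = −x and all diagonal entries of x are zero) of rank exactly 2(n−i) satisfies, as an equality of rational numbers, #{x} = binom(n,i)_{q^{−2}} · (q^{−2(i+δ)−1}; q^{−2})_{n−i} · q^{C(2n+δ,2) − C(2i+δ,2)}, where C(a,2) = a(a−1)/2. -/
/-!
STATEMENT 17: Lemma `lem:ranks`, formula (ranks F) — the number of alternating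
`(2n+δ) × (2n+δ)` matrices over `F_q` of rank `2(n-i)`.
-/

noncomputable section

open scoped Classical

open Matrix

section Proofs

variable {F : Type*} [Field F] {N : ℕ}


lemma alt_quad (y : Matrix (Fin N) (Fin N) F) (hy : yᵀ = -y) (hd : ∀ j, y j j = 0)
    (w : Fin N → F) : w ⬝ᵥ (y *ᵥ w) = 0 := by
  have hskew : ∀ i j, y j i = - y i j := by
    intro i j
    have := congrFun (congrFun hy i) j
    simpa [Matrix.transpose_apply] using this
  classical
  have h0 : w ⬝ᵥ (y *ᵥ w) = ∑ p ∈ (Finset.univ ×ˢ Finset.univ : Finset (Fin N × Fin N)),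
      w p.1 * (y p.1 p.2 * w p.2) := by
    rw [Finset.sum_product]
    simp [dotProduct, mulVec, Finset.mul_sum]
  rw [h0]
  refine Finset.sum_involution (fun p _ => (p.2, p.1)) ?_ ?_ ?_ ?_
  · intro p _
    rcases p with ⟨i, j⟩
    simp only
    rw [hskew i j]
    ring
  · rintro ⟨i, j⟩ _ h hpe
    apply h
    have hji : j = i := congrArg Prod.fst hpe
    subst hji
    simp [hd]
  · intro p _; simp
  · intro p _; rfl

lemma dot_ext {a b : Fin N → F} (h : ∀ z, a ⬝ᵥ z = b ⬝ᵥ z) : a = b := by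
  funext j
  have := h (Pi.single j 1)
  simpa [dotProduct, Pi.single_apply, mul_ite] using this

lemma exists_ker_dot (y : Matrix (Fin N) (Fin N) F) (hy : yᵀ = -y) (v : Fin N → F)
    (hv : v ∉ LinearMap.range y.mulVecLin) : ∃ u, y *ᵥ u = 0 ∧ v ⬝ᵥ u ≠ 0 := by
  by_contra h
  push_neg at h
  apply hv
  -- build the functional z ↦ v ⬝ᵥ z
  let φ : (Fin N → F) →ₗ[F] F :=
    { toFun := fun z => v ⬝ᵥ z
      map_add' := fun a b => dotProduct_add v a b
      map_smul' := fun c a => by simp [dotProduct_smul] }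
  have hker : LinearMap.ker y.mulVecLin ≤ LinearMap.ker φ := by
    intro u hu
    have : y *ᵥ u = 0 := hu
    exact h u this
  -- factor through the range
  let e := LinearMap.quotKerEquivRange y.mulVecLin
  let ψ1 : LinearMap.range y.mulVecLin →ₗ[F] F :=
    ((LinearMap.ker y.mulVecLin).liftQ φ hker).comp e.symm.toLinearMap
  obtain ⟨g, hg⟩ := LinearMap.exists_extend ψ1
  have key : ∀ z, v ⬝ᵥ z = g (y *ᵥ z) := by
    intro z
    have h1 : ψ1 ⟨y *ᵥ z, ⟨z, rfl⟩⟩ = φ z := by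
      have h3 : e (Submodule.Quotient.mk z) = ⟨y *ᵥ z, ⟨z, rfl⟩⟩ := by
        apply Subtype.ext
        rfl
      simp only [ψ1, LinearMap.comp_apply]
      rw [← h3]
      rw [show ((e.symm : _ →ₗ[F] _) (e (Submodule.Quotient.mk z))) = e.symm (e (Submodule.Quotient.mk z)) from rfl, LinearEquiv.symm_apply_apply]
      rfl
    have h2 : g (y *ᵥ z) = ψ1 ⟨y *ᵥ z, ⟨z, rfl⟩⟩ := by
      have := congrFun (congrArg DFunLike.coe hg) (⟨y *ᵥ z, ⟨z, rfl⟩⟩ :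
        LinearMap.range y.mulVecLin)
      simpa using this
    rw [h2, h1]
    rfl
  -- represent g by a vector
  set u0 : Fin N → F := fun i => g (Pi.single i 1) with hu0
  have hsingle : ∀ x : Fin N, (fun j => if x = j then (1:F) else 0) = Pi.single x 1 := by
    intro x; funext j; simp [Pi.single_apply, eq_comm]
  have hrep : ∀ m : Fin N → F, g m = u0 ⬝ᵥ m := by
    intro m
    rw [LinearMap.pi_apply_eq_sum_univ g m]
    simp only [hsingle]
    simp [dotProduct, u0, mul_comm]
  have hvy : v = yᵀ *ᵥ u0 := by
    apply dot_ext
    intro z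
    rw [key z, hrep, Matrix.mulVec_transpose, ← Matrix.dotProduct_mulVec]
  refine ⟨-u0, ?_⟩
  show y *ᵥ (-u0) = v
  rw [hvy, hy, Matrix.neg_mulVec, Matrix.mulVec_neg]

/-- Border an `N × N` matrix `y` with a new last column `v` and last row `-v`. -/
def assemble (y : Matrix (Fin N) (Fin N) F) (v : Fin N → F) :
    Matrix (Fin N ⊕ Fin 1) (Fin N ⊕ Fin 1) F :=
  Matrix.fromBlocks y (Matrix.of fun i _ => v i) (Matrix.of fun _ j => -(v j)) 0

lemma assemble_mulVec (y : Matrix (Fin N) (Fin N) F) (v : Fin N → F)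
    (u : Fin N ⊕ Fin 1 → F) :
    assemble y v *ᵥ u = Sum.elim (y *ᵥ (u ∘ Sum.inl) + (u (Sum.inr 0)) • v)
      (fun _ => -(v ⬝ᵥ (u ∘ Sum.inl))) := by
  funext i
  cases i with
  | inl i =>
    show ((fromBlocks y _ _ 0) *ᵥ u) (Sum.inl i) = _
    rw [fromBlocks_mulVec]
    show (y *ᵥ (u ∘ Sum.inl)) i + ((Matrix.of fun i _ => v i) *ᵥ (u ∘ Sum.inr)) i
      = (y *ᵥ (u ∘ Sum.inl)) i + u (Sum.inr 0) * v i
    congr 1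
    simp [mulVec, dotProduct, mul_comm]
  | inr k =>
    show ((fromBlocks y _ _ 0) *ᵥ u) (Sum.inr k) = _
    rw [fromBlocks_mulVec]
    show ((Matrix.of fun _ j => -(v j)) *ᵥ (u ∘ Sum.inl)) k + ((0 : Matrix (Fin 1) (Fin 1) F) *ᵥ (u ∘ Sum.inr)) k
      = -(v ⬝ᵥ (u ∘ Sum.inl))
    rw [Matrix.zero_mulVec]
    simp [mulVec, dotProduct, neg_mul]

lemma bot_row_eq (y : Matrix (Fin N) (Fin N) F) (hy : yᵀ = -y) (w z : Fin N → F) :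
    -((y *ᵥ w) ⬝ᵥ z) = w ⬝ᵥ (y *ᵥ z) := by
  rw [Matrix.dotProduct_mulVec w y z, ← Matrix.mulVec_transpose, hy, Matrix.neg_mulVec,
    neg_dotProduct]

/-- The lifting map used for the case `v ∈ range y`. -/
def liftMap (w : Fin N → F) : (Fin N → F) →ₗ[F] (Fin N ⊕ Fin 1 → F) where
  toFun z := Sum.elim z (fun _ => w ⬝ᵥ z)
  map_add' a b := by
    funext x
    cases x <;> simp [dotProduct_add]
  map_smul' c a := by
    funext x
    cases x <;> simp [dotProduct_smul]

lemma rank_assemble_mem (y : Matrix (Fin N) (Fin N) F) (hy : yᵀ = -y) (hd : ∀ j, y j j = 0)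
    (w : Fin N → F) : (assemble y (y *ᵥ w)).rank = y.rank := by
  set v := y *ᵥ w with hv
  have hvw : v ⬝ᵥ w = 0 := by
    have := bot_row_eq y hy w w
    rw [alt_quad y hy hd w] at this
    have := neg_eq_zero.mp this
    exact this
  have comp : ∀ z' : Fin N → F, liftMap w (y *ᵥ z')
      = Sum.elim (y *ᵥ z') (fun _ => -(v ⬝ᵥ z')) := by
    intro z'
    funext k
    cases k with
    | inl i => rfl
    | inr k =>
      show w ⬝ᵥ (y *ᵥ z') = -(v ⬝ᵥ z')
      rw [← bot_row_eq y hy w z']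
  have hinj : Function.Injective (liftMap (F := F) w) := by
    intro a b hab
    funext i
    exact congrFun hab (Sum.inl i)
  have hrange : LinearMap.range (assemble y v).mulVecLin =
      Submodule.map (liftMap w) (LinearMap.range y.mulVecLin) := by
    ext m
    constructor
    · rintro ⟨u, rfl⟩
      refine ⟨y *ᵥ (u ∘ Sum.inl + u (Sum.inr 0) • w), ⟨_, rfl⟩, ?_⟩
      rw [Matrix.mulVecLin_apply, assemble_mulVec, comp]
      funext k
      cases k with
      | inl i =>
        show (y *ᵥ (u ∘ Sum.inl + u (Sum.inr 0) • w)) i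
          = (y *ᵥ (u ∘ Sum.inl) + u (Sum.inr 0) • v) i
        rw [Matrix.mulVec_add, Matrix.mulVec_smul]
      | inr k =>
        show -(v ⬝ᵥ (u ∘ Sum.inl + u (Sum.inr 0) • w)) = -(v ⬝ᵥ (u ∘ Sum.inl))
        rw [dotProduct_add, dotProduct_smul, smul_eq_mul, hvw, mul_zero, add_zero]
    · rintro ⟨-, ⟨z, rfl⟩, rfl⟩
      refine ⟨Sum.elim z 0, ?_⟩
      rw [Matrix.mulVecLin_apply, assemble_mulVec]
      have h1 : (Sum.elim z (0 : Fin 1 → F)) ∘ Sum.inl = z := rfl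
      have h2 : (Sum.elim z (0 : Fin 1 → F)) (Sum.inr 0) = 0 := rfl
      rw [h1, h2, zero_smul, add_zero]
      rw [show y.mulVecLin z = y *ᵥ z from rfl, comp]
  rw [Matrix.rank, hrange, Matrix.rank]
  exact (LinearEquiv.finrank_eq
    (Submodule.equivMapOfInjective _ hinj (LinearMap.range y.mulVecLin))).symm

/-- the pairing map for the case `v ∉ range y` -/
def pairMap (W : Submodule F (Fin N → F)) :
    (W × (Fin 1 → F)) →ₗ[F] (Fin N ⊕ Fin 1 → F) where
  toFun p := Sum.elim (p.1 : Fin N → F) p.2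
  map_add' a b := by
    funext x
    cases x <;> simp
  map_smul' c a := by
    funext x
    cases x <;> simp

lemma rank_assemble_not_mem (y : Matrix (Fin N) (Fin N) F) (hy : yᵀ = -y)
    (v : Fin N → F) (hv : v ∉ LinearMap.range y.mulVecLin) :
    (assemble y v).rank = y.rank + 2 := by
  obtain ⟨u0, hu0, he⟩ := exists_ker_dot y hy v hv
  set R := LinearMap.range y.mulVecLin with hR
  set W := R ⊔ (F ∙ v) with hW
  have hmem : ∀ p : W × (Fin 1 → F), pairMap W p ∈ LinearMap.range (assemble y v).mulVecLin := by
    rintro ⟨⟨a, ha⟩, b⟩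
    obtain ⟨z', hz, c', hc', hzc⟩ := Submodule.mem_sup.mp ha
    obtain ⟨z, rfl⟩ := hz
    obtain ⟨c, rfl⟩ := Submodule.mem_span_singleton.mp hc'
    set d : F := (-(v ⬝ᵥ z) - b 0) / (v ⬝ᵥ u0) with hd
    refine ⟨Sum.elim (z + d • u0) (fun _ => c), ?_⟩
    rw [Matrix.mulVecLin_apply, assemble_mulVec]
    have h1 : (Sum.elim (z + d • u0) (fun _ => c) : Fin N ⊕ Fin 1 → F) ∘ Sum.inl
        = z + d • u0 := rfl
    have h2 : (Sum.elim (z + d • u0) (fun _ => c) : Fin N ⊕ Fin 1 → F) (Sum.inr 0) = c := rfl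
    rw [h1, h2]
    show Sum.elim _ _ = Sum.elim a b
    funext k
    cases k with
    | inl i =>
      show (y *ᵥ (z + d • u0) + c • v) i = a i
      rw [Matrix.mulVec_add, Matrix.mulVec_smul, hu0, smul_zero, add_zero, ← hzc]
      rfl
    | inr k =>
      show -(v ⬝ᵥ (z + d • u0)) = b k
      have hk : k = 0 := Subsingleton.elim _ _
      subst hk
      rw [dotProduct_add, dotProduct_smul, smul_eq_mul, hd]
      field_simp
      ring
  have hsurj : ∀ m ∈ LinearMap.range (assemble y v).mulVecLin,
      ∃ p : W × (Fin 1 → F), pairMap W p = m := by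
    rintro m ⟨u, rfl⟩
    rw [Matrix.mulVecLin_apply, assemble_mulVec]
    refine ⟨⟨⟨y *ᵥ (u ∘ Sum.inl) + u (Sum.inr 0) • v, ?_⟩,
      fun _ => -(v ⬝ᵥ (u ∘ Sum.inl))⟩, rfl⟩
    exact Submodule.add_mem_sup ⟨_, rfl⟩
      (Submodule.smul_mem _ _ (Submodule.mem_span_singleton_self v))
  have hinj : Function.Injective (pairMap (F := F) W) := by
    rintro ⟨a, b⟩ ⟨a', b'⟩ hab
    have h1 : (a : Fin N → F) = a' := by
      funext i; exact congrFun hab (Sum.inl i)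
    have h2 : b = b' := by
      funext i; exact congrFun hab (Sum.inr i)
    exact Prod.ext (Subtype.ext h1) h2
  have hequiv : (W × (Fin 1 → F)) ≃ₗ[F] LinearMap.range (assemble y v).mulVecLin := by
    refine LinearEquiv.ofBijective
      ((pairMap W).codRestrict (LinearMap.range (assemble y v).mulVecLin) hmem) ⟨?_, ?_⟩
    · intro p p' hpp'
      exact hinj (congrArg Subtype.val hpp')
    · rintro ⟨m, hm⟩
      obtain ⟨p, hp⟩ := hsurj m hm
      exact ⟨p, Subtype.ext hp⟩
  have hv0 : v ≠ 0 := fun h => hv (h ▸ Submodule.zero_mem R)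
  have hinf : R ⊓ (F ∙ v) = ⊥ := by
    rw [eq_bot_iff]
    rintro x ⟨hx1, hx2⟩
    obtain ⟨c, rfl⟩ := Submodule.mem_span_singleton.mp hx2
    rcases eq_or_ne c 0 with rfl | hc
    · simp
    · exfalso
      apply hv
      have hmem' : (c⁻¹ • (c • v)) ∈ R := Submodule.smul_mem R c⁻¹ hx1
      rwa [smul_smul, inv_mul_cancel₀ hc, one_smul] at hmem'
  have hWrank : Module.finrank F W = y.rank + 1 := by
    have hsum := Submodule.finrank_sup_add_finrank_inf_eq R (F ∙ v)
    rw [hinf, finrank_bot, add_zero, finrank_span_singleton hv0] at hsum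
    exact hsum
  rw [Matrix.rank, ← LinearEquiv.finrank_eq hequiv, Module.finrank_prod, hWrank,
    Module.finrank_pi]
  simp

section Counting

variable (F) [Fintype F]

/-- The number of alternating `N × N` matrices of rank `2r`. -/
noncomputable def altCount (N r : ℕ) : ℕ :=
  (Finset.univ.filter (fun x : Matrix (Fin N) (Fin N) F =>
     x.transpose = -x ∧ (∀ j, x j j = 0) ∧ x.rank = 2 * r)).card

variable {F}

lemma matrix_rank_eq_zero_iff (x : Matrix (Fin N) (Fin N) F) : x.rank = 0 ↔ x = 0 := by
  constructor
  · intro h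
    have h1 : LinearMap.range x.mulVecLin = ⊥ := by
      rw [Matrix.rank] at h
      exact Submodule.finrank_eq_zero.mp h
    have h2 : x.mulVecLin = 0 := LinearMap.range_eq_bot.mp h1
    ext i j
    have h3 : x *ᵥ Pi.single j 1 = 0 := by
      rw [← Matrix.mulVecLin_apply, h2]; rfl
    have h4 := congrFun h3 i
    rw [Matrix.mulVec_single] at h4
    simpa using h4
  · rintro rfl; exact Matrix.rank_zero

lemma altCount_rank_zero (N : ℕ) : altCount F N 0 = 1 := by
  unfold altCount
  rw [show (1 : ℕ) = ({(0 : Matrix (Fin N) (Fin N) F)} : Finset _).card from rfl]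
  congr 1
  ext x
  simp only [Finset.mem_filter, Finset.mem_univ, true_and, Finset.mem_singleton]
  constructor
  · rintro ⟨h1, h2, h3⟩
    exact (matrix_rank_eq_zero_iff x).mp (by simpa using h3)
  · rintro rfl
    exact ⟨by simp, by simp, by simp⟩

lemma altCount_of_lt (N r : ℕ) (h : N < 2 * r) : altCount F N r = 0 := by
  unfold altCount
  rw [Finset.card_eq_zero, Finset.eq_empty_iff_forall_notMem]
  rintro x hx
  rw [Finset.mem_filter] at hx
  obtain ⟨-, -, -, h3⟩ := hx
  have := Matrix.rank_le_card_width x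
  rw [h3, Fintype.card_fin] at this
  omega

lemma altCount_succ_aux1 (N r : ℕ) :
    altCount F (N+1) r = (Finset.univ.filter
      (fun x : Matrix (Fin N ⊕ Fin 1) (Fin N ⊕ Fin 1) F =>
        xᵀ = -x ∧ (∀ j, x j j = 0) ∧ x.rank = 2 * r)).card := by
  unfold altCount
  set e : Fin N ⊕ Fin 1 ≃ Fin (N + 1) := finSumFinEquiv
  refine Finset.card_bij' (fun x _ => Matrix.reindex e.symm e.symm x)
    (fun x _ => Matrix.reindex e e x) ?_ ?_ ?_ ?_
  · intro x hx
    rw [Finset.mem_filter] at hx ⊢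
    obtain ⟨-, h1, h2, h3⟩ := hx
    refine ⟨Finset.mem_univ _, ?_, ?_, ?_⟩
    · show (Matrix.reindex e.symm e.symm x)ᵀ = -(Matrix.reindex e.symm e.symm x)
      rw [Matrix.reindex_apply, Matrix.transpose_submatrix, h1]
      rfl
    · intro j
      show (Matrix.reindex e.symm e.symm x) j j = 0
      rw [Matrix.reindex_apply, Matrix.submatrix_apply]
      exact h2 _
    · show (Matrix.reindex e.symm e.symm x).rank = 2 * r
      rw [Matrix.rank_reindex, h3]
  · intro x hx
    rw [Finset.mem_filter] at hx ⊢
    obtain ⟨-, h1, h2, h3⟩ := hx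
    refine ⟨Finset.mem_univ _, ?_, ?_, ?_⟩
    · show (Matrix.reindex e e x)ᵀ = -(Matrix.reindex e e x)
      rw [Matrix.reindex_apply, Matrix.transpose_submatrix, h1]
      rfl
    · intro j
      show (Matrix.reindex e e x) j j = 0
      rw [Matrix.reindex_apply, Matrix.submatrix_apply]
      exact h2 _
    · show (Matrix.reindex e e x).rank = 2 * r
      rw [Matrix.rank_reindex, h3]
  · intro x _
    simp
  · intro x _
    simp

lemma assemble_alt {y : Matrix (Fin N) (Fin N) F} {v : Fin N → F}
    (h1 : yᵀ = -y) (h2 : ∀ j, y j j = 0) :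
    (assemble y v)ᵀ = -(assemble y v) ∧ (∀ j, assemble y v j j = 0) := by
  have h1' : ∀ i j, y j i = -y i j := fun i j => congrFun (congrFun h1 i) j
  constructor
  · ext i j
    cases i with
    | inl i =>
      cases j with
      | inl j =>
        show y j i = -(y i j)
        exact h1' i j
      | inr k =>
        show -(v i) = -(v i)
        rfl
    | inr k =>
      cases j with
      | inl j =>
        show v j = -(-(v j))
        rw [neg_neg]
      | inr k' =>
        show (0 : Matrix (Fin 1) (Fin 1) F) k' k = -((0 : Matrix (Fin 1) (Fin 1) F) k k')
        simp
  · rintro (j | k)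
    · exact h2 j
    · rfl

lemma eq_assemble_self {x : Matrix (Fin N ⊕ Fin 1) (Fin N ⊕ Fin 1) F}
    (h1 : xᵀ = -x) (h2 : ∀ j, x j j = 0) :
    assemble x.toBlocks₁₁ (fun i => x (Sum.inl i) (Sum.inr 0)) = x := by
  have h1' : ∀ i j, x j i = -x i j := fun i j => congrFun (congrFun h1 i) j
  ext i j
  cases i with
  | inl i =>
    cases j with
    | inl j => rfl
    | inr k =>
      have hk : k = 0 := Subsingleton.elim _ _
      subst hk
      rfl
  | inr k =>
    cases j with
    | inl j =>
      have hk : k = 0 := Subsingleton.elim _ _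
      subst hk
      show -(x (Sum.inl j) (Sum.inr 0)) = x (Sum.inr 0) (Sum.inl j)
      rw [← h1' (Sum.inl j) (Sum.inr 0)]
    | inr k' =>
      show (0 : F) = x (Sum.inr k) (Sum.inr k')
      have hk : k = k' := Subsingleton.elim _ _
      subst hk
      exact (h2 _).symm

lemma altCount_succ_aux2 (N r : ℕ) :
    (Finset.univ.filter
      (fun x : Matrix (Fin N ⊕ Fin 1) (Fin N ⊕ Fin 1) F =>
        xᵀ = -x ∧ (∀ j, x j j = 0) ∧ x.rank = 2 * r)).card
    = (Finset.univ.filter (fun p : Matrix (Fin N) (Fin N) F × (Fin N → F) =>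
        p.1ᵀ = -p.1 ∧ (∀ j, p.1 j j = 0) ∧ (assemble p.1 p.2).rank = 2 * r)).card := by
  refine Finset.card_bij'
    (fun x _ => (x.toBlocks₁₁, fun i => x (Sum.inl i) (Sum.inr 0)))
    (fun p _ => assemble p.1 p.2) ?_ ?_ ?_ ?_
  · intro x hx
    rw [Finset.mem_filter] at hx ⊢
    obtain ⟨-, h1, h2, h3⟩ := hx
    have h1' : ∀ i j, x j i = -x i j := fun i j => congrFun (congrFun h1 i) j
    refine ⟨Finset.mem_univ _, ?_, ?_, ?_⟩
    · ext i j
      show x (Sum.inl j) (Sum.inl i) = -(x (Sum.inl i) (Sum.inl j))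
      exact h1' _ _
    · intro j
      exact h2 (Sum.inl j)
    · rw [eq_assemble_self h1 h2, h3]
  · intro p hp
    rw [Finset.mem_filter] at hp ⊢
    obtain ⟨-, h1, h2, h3⟩ := hp
    obtain ⟨ha1, ha2⟩ := assemble_alt (v := p.2) h1 h2
    exact ⟨Finset.mem_univ _, ha1, ha2, h3⟩
  · intro x hx
    rw [Finset.mem_filter] at hx
    obtain ⟨-, h1, h2, -⟩ := hx
    exact eq_assemble_self h1 h2
  · intro p _
    rfl

lemma altCount_succ_aux3 (N r : ℕ) :
    (Finset.univ.filter (fun p : Matrix (Fin N) (Fin N) F × (Fin N → F) =>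
        p.1ᵀ = -p.1 ∧ (∀ j, p.1 j j = 0) ∧ (assemble p.1 p.2).rank = 2 * r)).card
    = ∑ y ∈ Finset.univ.filter
        (fun y : Matrix (Fin N) (Fin N) F => yᵀ = -y ∧ ∀ j, y j j = 0),
        (Finset.univ.filter (fun v : Fin N → F => (assemble y v).rank = 2 * r)).card := by
  rw [Finset.card_eq_sum_card_fiberwise (f := Prod.fst)
    (t := Finset.univ.filter (fun y : Matrix (Fin N) (Fin N) F => yᵀ = -y ∧ ∀ j, y j j = 0))]
  · refine Finset.sum_congr rfl ?_
    intro y hy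
    rw [Finset.mem_filter] at hy
    obtain ⟨-, hy1, hy2⟩ := hy
    refine Finset.card_bij' (fun p _ => p.2) (fun v _ => (y, v)) ?_ ?_ ?_ ?_
    · intro p hp
      simp only [Finset.mem_filter, Finset.mem_univ, true_and] at hp ⊢
      obtain ⟨⟨-, -, h3⟩, h4⟩ := hp
      rw [← h4]
      exact h3
    · intro v hv
      simp only [Finset.mem_filter, Finset.mem_univ, true_and] at hv ⊢
      exact ⟨⟨hy1, hy2, hv⟩, trivial⟩
    · intro p hp
      simp only [Finset.mem_filter] at hp
      obtain ⟨-, h4⟩ := hp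
      exact Prod.ext h4.symm rfl
    · intro v _
      rfl
  · intro p hp
    rw [Finset.mem_coe, Finset.mem_filter] at hp ⊢
    exact ⟨Finset.mem_univ _, hp.2.1, hp.2.2.1⟩

lemma card_v_filter (y : Matrix (Fin N) (Fin N) F) (h1 : yᵀ = -y) (h2 : ∀ j, y j j = 0)
    (R : ℕ) :
    (Finset.univ.filter (fun v : Fin N → F => (assemble y v).rank = R)).card
    = (if y.rank = R then (Fintype.card F)^(y.rank) else 0)
      + (if y.rank + 2 = R then (Fintype.card F)^N - (Fintype.card F)^(y.rank) else 0) := by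
  have key : ∀ v : Fin N → F, (assemble y v).rank
      = if v ∈ LinearMap.range y.mulVecLin then y.rank else y.rank + 2 := by
    intro v
    split_ifs with h
    · obtain ⟨w, rfl⟩ := h
      exact rank_assemble_mem y h1 h2 w
    · exact rank_assemble_not_mem y h1 v h
  have hcardR : (Finset.univ.filter
      (fun v : Fin N → F => v ∈ LinearMap.range y.mulVecLin)).card
      = (Fintype.card F)^(y.rank) := by
    have h8 : Fintype.card (LinearMap.range y.mulVecLin) = (Fintype.card F)^(y.rank) :=
      Module.card_eq_pow_finrank (K := F)
    have h9 : Fintype.card {v : Fin N → F // v ∈ LinearMap.range y.mulVecLin}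
        = (Finset.univ.filter
          (fun v : Fin N → F => v ∈ LinearMap.range y.mulVecLin)).card :=
      Fintype.card_of_subtype _ (by simp)
    rw [← h9]
    exact h8
  have hcardNR : (Finset.univ.filter
      (fun v : Fin N → F => v ∉ LinearMap.range y.mulVecLin)).card
      = (Fintype.card F)^N - (Fintype.card F)^(y.rank) := by
    have := Finset.card_filter_add_card_filter_not
      (s := (Finset.univ : Finset (Fin N → F)))
      (p := fun v => v ∈ LinearMap.range y.mulVecLin)
    rw [Finset.card_univ] at this
    have hcard : Fintype.card (Fin N → F) = (Fintype.card F)^N := by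
      rw [Fintype.card_fun, Fintype.card_fin]
    omega
  rcases eq_or_ne y.rank R with hR | hR
  · rw [if_pos hR, if_neg (by omega)]
    rw [show (Finset.univ.filter (fun v : Fin N → F => (assemble y v).rank = R))
      = Finset.univ.filter (fun v : Fin N → F => v ∈ LinearMap.range y.mulVecLin) from ?_]
    · rw [hcardR]; omega
    · apply Finset.filter_congr
      intro v _
      rw [key v]
      constructor
      · intro hvr
        by_contra hmem
        rw [if_neg hmem] at hvr
        omega
      · intro hmem
        rw [if_pos hmem, hR]
  · rcases eq_or_ne (y.rank + 2) R with hR2 | hR2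
    · rw [if_neg hR, if_pos hR2]
      rw [show (Finset.univ.filter (fun v : Fin N → F => (assemble y v).rank = R))
        = Finset.univ.filter (fun v : Fin N → F => v ∉ LinearMap.range y.mulVecLin) from ?_]
      · rw [hcardNR]; omega
      · apply Finset.filter_congr
        intro v _
        rw [key v]
        constructor
        · intro hvr hmem
          rw [if_pos hmem] at hvr
          omega
        · intro hmem
          rw [if_neg hmem]
          exact hR2
    · rw [if_neg hR, if_neg hR2, add_zero]
      rw [Finset.card_eq_zero, Finset.eq_empty_iff_forall_notMem]
      intro v hv
      rw [Finset.mem_filter, key v] at hv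
      obtain ⟨-, hv⟩ := hv
      split_ifs at hv <;> omega

lemma altCount_succ (N r : ℕ) :
    altCount F (N+1) (r+1)
      = (Fintype.card F)^(2*(r+1)) * altCount F N (r+1)
        + ((Fintype.card F)^N - (Fintype.card F)^(2*r)) * altCount F N r := by
  rw [altCount_succ_aux1, altCount_succ_aux2, altCount_succ_aux3]
  have step : ∀ y ∈ Finset.univ.filter
      (fun y : Matrix (Fin N) (Fin N) F => yᵀ = -y ∧ ∀ j, y j j = 0),
      (Finset.univ.filter (fun v : Fin N → F => (assemble y v).rank = 2 * (r+1))).card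
      = (if y.rank = 2*(r+1) then (Fintype.card F)^(2*(r+1)) else 0)
        + (if y.rank = 2*r then (Fintype.card F)^N - (Fintype.card F)^(2*r) else 0) := by
    intro y hy
    rw [Finset.mem_filter] at hy
    rw [card_v_filter y hy.2.1 hy.2.2 (2*(r+1))]
    congr 1
    · split_ifs with h
      · rw [h]
      · rfl
    · rcases eq_or_ne y.rank (2*r) with h | h
      · rw [if_pos (by omega), if_pos h, h]
      · rw [if_neg (by omega), if_neg h]
  rw [Finset.sum_congr rfl step, Finset.sum_add_distrib]
  congr 1
  · rw [← Finset.sum_filter, Finset.sum_const, smul_eq_mul, Finset.filter_filter, mul_comm]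
    congr 1
    unfold altCount
    congr 1
    apply Finset.filter_congr
    intro x _
    constructor
    · rintro ⟨⟨a, b⟩, c⟩; exact ⟨a, b, c⟩
    · rintro ⟨a, b, c⟩; exact ⟨⟨a, b⟩, c⟩
  · rw [← Finset.sum_filter, Finset.sum_const, smul_eq_mul, Finset.filter_filter, mul_comm]
    congr 1
    unfold altCount
    congr 1
    apply Finset.filter_congr
    intro x _
    constructor
    · rintro ⟨⟨a, b⟩, c⟩; exact ⟨a, b, c⟩
    · rintro ⟨a, b, c⟩; exact ⟨⟨a, b⟩, c⟩

end Counting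

section Qside

/-- ascending product `∏_{j<m} (q^{t+j} - 1)` -/
def Pp (q m t : ℕ) : ℚ := ∏ j ∈ Finset.range m, ((q:ℚ)^(t+j) - 1)

/-- `∏_{k<r} (q^{2k+2} - 1)` -/
def Dd (q r : ℕ) : ℚ := ∏ k ∈ Finset.range r, ((q:ℚ)^(2*k+2) - 1)

/-- the closed form: `hAux q M r = h (2r+M) r`. -/
def hAux (q M r : ℕ) : ℚ := (q:ℚ)^(r*(r-1)) * Pp q (2*r) (M+1) / Dd q r

lemma pow_sub_one_ne {q : ℕ} (hq : 2 ≤ q) {k : ℕ} (hk : 1 ≤ k) : ((q:ℚ)^k - 1) ≠ 0 := by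
  have h1 : (2:ℚ) ≤ (q:ℚ) := by exact_mod_cast hq
  have h2 : (2:ℚ)^k ≤ (q:ℚ)^k := by
    apply pow_le_pow_left₀ (by norm_num) h1
  have h3 : (2:ℚ) ≤ (2:ℚ)^k := by
    calc (2:ℚ) = 2^1 := (pow_one 2).symm
    _ ≤ 2^k := by apply pow_le_pow_right₀ (by norm_num) hk
  intro h
  have : (q:ℚ)^k = 1 := by linarith
  linarith

lemma Dd_ne {q : ℕ} (hq : 2 ≤ q) (r : ℕ) : Dd q r ≠ 0 := by
  unfold Dd
  apply Finset.prod_ne_zero_iff.mpr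
  intro k _
  exact pow_sub_one_ne hq (by omega)

lemma qcast_ne {q : ℕ} (hq : 2 ≤ q) : (q:ℚ) ≠ 0 := by
  have : (2:ℚ) ≤ (q:ℚ) := by exact_mod_cast hq
  linarith

lemma Pp_succ_top (q m t : ℕ) : Pp q (m+1) t = Pp q m t * ((q:ℚ)^(t+m) - 1) :=
  Finset.prod_range_succ _ _

lemma Pp_succ_bot (q m t : ℕ) : Pp q (m+1) t = ((q:ℚ)^t - 1) * Pp q m (t+1) := by
  unfold Pp
  rw [Finset.prod_range_succ']
  rw [add_zero, mul_comm]
  congr 1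
  apply Finset.prod_congr rfl
  intro j _
  congr 2
  omega

lemma Dd_succ (q r : ℕ) : Dd q (r+1) = Dd q r * ((q:ℚ)^(2*r+2) - 1) :=
  Finset.prod_range_succ _ _

/-- recursion identity, generic case -/
lemma IDE1 {q : ℕ} (hq : 2 ≤ q) (s M : ℕ) :
    hAux q (M+1) (s+1) = (q:ℚ)^(2*s+2) * hAux q M (s+1)
      + ((q:ℚ)^(2*s+2+M) - (q:ℚ)^(2*s)) * hAux q (M+2) s := by
  have hP1 : Pp q (2*(s+1)) (M+2)
      = ((q:ℚ)^(M+2) - 1) * (Pp q (2*s) (M+3) * ((q:ℚ)^(M+3+2*s) - 1)) := by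
    rw [show 2*(s+1) = (2*s+1)+1 by ring, Pp_succ_bot, Pp_succ_top]
  have hP2 : Pp q (2*(s+1)) (M+1)
      = ((q:ℚ)^(M+1) - 1) * (((q:ℚ)^(M+2) - 1) * Pp q (2*s) (M+3)) := by
    rw [show 2*(s+1) = (2*s+1)+1 by ring, Pp_succ_bot, Pp_succ_bot]
  unfold hAux
  rw [hP1, hP2, Dd_succ]
  rw [show (s+1)*((s+1)-1) = s*(s-1) + 2*s by cases s <;> simp <;> ring]
  have h1 : ((q:ℚ)^(2*s+2) - 1) ≠ 0 := pow_sub_one_ne hq (by omega)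
  have h2 : Dd q s ≠ 0 := Dd_ne hq s
  have hx : (q:ℚ) ≠ 0 := qcast_ne hq
  field_simp
  ring_nf

/-- recursion identity, boundary case `N = 2s+1`. -/
lemma IDE2 {q : ℕ} (hq : 2 ≤ q) (s : ℕ) :
    hAux q 0 (s+1) = ((q:ℚ)^(2*s+1) - (q:ℚ)^(2*s)) * hAux q 1 s := by
  have hP1 : Pp q (2*(s+1)) 1
      = ((q:ℚ)^1 - 1) * (Pp q (2*s) 2 * ((q:ℚ)^(2+2*s) - 1)) := by
    rw [show 2*(s+1) = (2*s+1)+1 by ring, Pp_succ_bot, Pp_succ_top]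
  unfold hAux
  rw [hP1, Dd_succ]
  rw [show (s+1)*((s+1)-1) = s*(s-1) + 2*s by cases s <;> simp <;> ring]
  have h1 : ((q:ℚ)^(2*s+2) - 1) ≠ 0 := pow_sub_one_ne hq (by omega)
  have h2 : Dd q s ≠ 0 := Dd_ne hq s
  have hx : (q:ℚ) ≠ 0 := qcast_ne hq
  rw [show (2:ℕ)+2*s = 2*s+2 by ring]
  field_simp
  ring_nf

lemma hAux_zero (q M : ℕ) : hAux q M 0 = 1 := by
  simp [hAux, Pp, Dd]

end Qside

section MainInduction

variable {F : Type*} [Field F] [Fintype F]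

lemma altCount_eq_hAux : ∀ N r : ℕ, 2*r ≤ N →
    (altCount F N r : ℚ) = hAux (Fintype.card F) (N - 2*r) r := by
  have hq : 2 ≤ Fintype.card F := Fintype.one_lt_card
  intro N
  induction N with
  | zero =>
    intro r hr
    have hr0 : r = 0 := by omega
    subst hr0
    rw [altCount_rank_zero, hAux_zero]
    norm_num
  | succ N ih =>
    intro r hr
    rcases r with - | s
    · rw [altCount_rank_zero, hAux_zero]
      norm_num
    · -- r = s+1, 2s+2 ≤ N+1
      have hcast : ((altCount F (N+1) (s+1) : ℕ) : ℚ)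
          = (Fintype.card F:ℚ)^(2*(s+1)) * (altCount F N (s+1) : ℚ)
            + ((Fintype.card F:ℚ)^N - (Fintype.card F:ℚ)^(2*s)) * (altCount F N s : ℚ) := by
        rw [altCount_succ]
        push_cast [Nat.cast_sub (pow_le_pow_right₀ (by omega : 1 ≤ Fintype.card F) (by omega : 2*s ≤ N))]
        ring
      rw [hcast]
      rcases Nat.lt_or_ge (2*(s+1)) (N+1) with hlt | hge
      · -- 2s+2 ≤ N
        have h1 : 2*(s+1) ≤ N := by omega
        have h2 : 2*s ≤ N := by omega
        rw [ih (s+1) h1, ih s h2]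
        set M : ℕ := N - 2*(s+1) with hM
        have e1 : N + 1 - 2*(s+1) = M + 1 := by omega
        have e2 : N - 2*s = M + 2 := by omega
        have e3 : N = 2*s+2+M := by omega
        rw [e1, e2, e3]
        rw [IDE1 hq s M]
        ring_nf
      · -- 2*(s+1) = N+1
        have hN : N = 2*s+1 := by omega
        have hz : altCount F N (s+1) = 0 := altCount_of_lt _ _ (by omega)
        have h2 : 2*s ≤ N := by omega
        rw [hz, ih s h2]
        have e1 : N + 1 - 2*(s+1) = 0 := by omega
        have e2 : N - 2*s = 1 := by omega
        rw [e1, e2, hN]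
        rw [IDE2 hq s]
        push_cast
        ring

end MainInduction

section PartC

lemma qFact_eq {q : ℕ} (hq : 2 ≤ q) (m : ℕ) :
    qFact ((q:ℚ)⁻¹ ^ 2) m = Dd q m / (q:ℚ)^(m*(m+1)) := by
  have hx : (q:ℚ) ≠ 0 := qcast_ne hq
  induction m with
  | zero => simp [qFact, Dd]
  | succ s ih =>
    have h0 : qFact ((q:ℚ)⁻¹ ^ 2) (s+1)
        = qFact ((q:ℚ)⁻¹ ^ 2) s * (1 - ((q:ℚ)⁻¹ ^ 2) ^ (s+1)) :=
      Finset.prod_range_succ _ _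
    have h1 : (((q:ℚ)⁻¹ ^ 2) : ℚ) ^ (s+1) = ((q:ℚ)^(2*s+2))⁻¹ := by
      rw [← pow_mul, inv_pow, show 2*(s+1) = 2*s+2 by ring]
    have h2 : ((q:ℚ))^(2*s+2) ≠ 0 := pow_ne_zero _ hx
    have h4 : (1 - ((q:ℚ)^(2*s+2))⁻¹) = ((q:ℚ)^(2*s+2) - 1) / (q:ℚ)^(2*s+2) := by
      field_simp
    rw [h0, h1, ih, Dd_succ, show (s+1)*(s+1+1) = s*(s+1) + (2*s+2) by ring,
      h4, div_mul_div_comm, pow_add (q:ℚ) (s*(s+1)) (2*s+2)]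

lemma qFact_ne {q : ℕ} (hq : 2 ≤ q) (m : ℕ) : qFact ((q:ℚ)⁻¹ ^ 2) m ≠ 0 := by
  rw [qFact_eq hq]
  exact div_ne_zero (Dd_ne hq m) (pow_ne_zero _ (qcast_ne hq))

lemma qPoch_eq {q : ℕ} (hq : 2 ≤ q) (c r : ℕ) :
    qPoch ((q:ℚ)⁻¹ ^ c) ((q:ℚ)⁻¹ ^ 2) r
      = (∏ k ∈ Finset.range r, ((q:ℚ)^(c+2*k) - 1)) / (q:ℚ)^(r*c + r*(r-1)) := by
  have hx : (q:ℚ) ≠ 0 := qcast_ne hq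
  induction r with
  | zero => simp [qPoch]
  | succ s ih =>
    have h0 : qPoch ((q:ℚ)⁻¹ ^ c) ((q:ℚ)⁻¹ ^ 2) (s+1)
        = qPoch ((q:ℚ)⁻¹ ^ c) ((q:ℚ)⁻¹ ^ 2) s * (1 - ((q:ℚ)⁻¹ ^ c) * ((q:ℚ)⁻¹ ^ 2) ^ s) :=
      Finset.prod_range_succ _ _
    have h1 : ((q:ℚ)⁻¹ ^ c) * ((q:ℚ)⁻¹ ^ 2) ^ s = ((q:ℚ)^(c+2*s))⁻¹ := by
      rw [← pow_mul, ← pow_add, inv_pow]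
    have hexp : (s+1)*c + (s+1)*(s+1-1) = (s*c + s*(s-1)) + (c+2*s) := by
      cases s
      · simp
      · simp only [Nat.succ_sub_one]
        ring
    have h4 : (1 - ((q:ℚ)^(c+2*s))⁻¹) = ((q:ℚ)^(c+2*s) - 1) / (q:ℚ)^(c+2*s) := by
      have h2 : ((q:ℚ))^(c+2*s) ≠ 0 := pow_ne_zero _ hx
      field_simp
    rw [h0, h1, ih, Finset.prod_range_succ, hexp, h4, div_mul_div_comm,
      pow_add (q:ℚ) (s*c + s*(s-1)) (c+2*s)]

lemma Pp_split (q r t : ℕ) :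
    Pp q (2*r) t = (∏ k ∈ Finset.range r, ((q:ℚ)^(t+2*k) - 1))
      * (∏ k ∈ Finset.range r, ((q:ℚ)^(t+2*k+1) - 1)) := by
  induction r with
  | zero => simp [Pp]
  | succ s ih =>
    rw [show 2*(s+1) = (2*s)+1+1 by ring, Pp_succ_top, Pp_succ_top, ih,
      Finset.prod_range_succ, Finset.prod_range_succ]
    rw [show t+(2*s+1) = t+2*s+1 by ring]
    ring

lemma Dd_add (q i r : ℕ) :
    Dd q (i+r) = Dd q i * ∏ k ∈ Finset.range r, ((q:ℚ)^(2*(i+k)+2) - 1) :=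
  Finset.prod_range_add _ _ _

lemma ch2_even (n : ℕ) : (2*n).choose 2 = n*(2*n-1) := by
  rw [Nat.choose_two_right, mul_assoc, Nat.mul_div_cancel_left _ (by norm_num)]

lemma ch2_odd (n : ℕ) : (2*n+1).choose 2 = (2*n+1)*n := by
  rw [Nat.choose_two_right, Nat.add_sub_cancel, show (2*n+1)*(2*n) = 2*((2*n+1)*n) by ring,
    Nat.mul_div_cancel_left _ (by norm_num)]

lemma ch2_even_diff (i s : ℕ) :
    (2*(i+s+1)).choose 2 = (4*i*(s+1) + (s+1)*(2*s+1)) + (2*i).choose 2 := by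
  rw [ch2_even, ch2_even, show 2*(i+s+1)-1 = 2*i+2*s+1 by omega]
  rcases i with - | j
  · simp
  · rw [show 2*(j+1)-1 = 2*j+1 by omega]
    ring

lemma ch2_odd_diff (i s : ℕ) :
    (2*(i+(s+1))+1).choose 2 = (4*i*(s+1) + (s+1)*(2*s+3)) + (2*i+1).choose 2 := by
  rw [ch2_odd, ch2_odd]
  ring

lemma hAux_eq_target {q : ℕ} (hq : 2 ≤ q) (i r δ : ℕ) (hδ : δ = 0 ∨ δ = 1) :
    hAux q (2*i+δ) r
      = qBinom ((q:ℚ)⁻¹ ^ 2) (i+r) i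
        * qPoch ((q:ℚ)⁻¹ ^ (2*(i+δ)+1)) ((q:ℚ)⁻¹ ^ 2) r
        * (q:ℚ) ^ ((2*(i+r)+δ).choose 2 - (2*i+δ).choose 2) := by
  have hx : (q:ℚ) ≠ 0 := qcast_ne hq
  rcases r with - | s
  · -- r = 0
    rw [hAux_zero]
    unfold qBinom
    rw [show i + 0 - i = 0 by omega, Nat.add_zero, Nat.sub_self]
    rw [show qFact ((q:ℚ)⁻¹ ^ 2) 0 = 1 from rfl]
    rw [show qPoch ((q:ℚ)⁻¹ ^ (2*(i+δ)+1)) ((q:ℚ)⁻¹ ^ 2) 0 = 1 from rfl]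
    rw [pow_zero, one_mul, mul_one, mul_one, div_self (qFact_ne hq i)]
  · -- r = s+1
    have hDr : Dd q (s+1) ≠ 0 := Dd_ne hq (s+1)
    have hDi : Dd q i ≠ 0 := Dd_ne hq i
    rcases hδ with rfl | rfl
    · -- δ = 0
      have hBle : (2*i).choose 2 ≤ (2*(i+s+1)).choose 2 :=
        Nat.choose_le_choose 2 (by omega)
      rw [show 2*(i+0)+1 = 2*i+1 by ring, show 2*i+0 = 2*i by ring,
        show 2*(i+(s+1))+0 = 2*(i+s+1) by ring]
      unfold hAux qBinom
      rw [show i+(s+1) - i = s+1 by omega]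
      rw [qFact_eq hq (i+(s+1)), qFact_eq hq (s+1), qFact_eq hq i,
        qPoch_eq hq (2*i+1) (s+1)]
      simp only [Nat.add_sub_cancel]
      rw [Pp_split q (s+1) (2*i+1), Dd_add q i (s+1)]
      have e1 : (∏ k ∈ Finset.range (s+1), ((q:ℚ)^(2*i+1+2*k+1) - 1))
          = ∏ k ∈ Finset.range (s+1), ((q:ℚ)^(2*(i+k)+2) - 1) := by
        apply Finset.prod_congr rfl
        intro k _
        congr 2
        omega
      rw [e1]
      rw [Nat.sub_eq_of_eq_add (ch2_even_diff i s)]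
      field_simp
      ring
    · -- δ = 1
      have hBle : (2*i+1).choose 2 ≤ (2*(i+(s+1))+1).choose 2 :=
        Nat.choose_le_choose 2 (by omega)
      rw [show 2*(i+1)+1 = 2*i+3 by ring]
      unfold hAux qBinom
      rw [show i+(s+1) - i = s+1 by omega]
      rw [qFact_eq hq (i+(s+1)), qFact_eq hq (s+1), qFact_eq hq i,
        qPoch_eq hq (2*i+3) (s+1)]
      simp only [Nat.add_sub_cancel]
      rw [show (2*i+1)+1 = 2*i+2 by ring]
      rw [Pp_split q (s+1) (2*i+2), Dd_add q i (s+1)]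
      have e1 : (∏ k ∈ Finset.range (s+1), ((q:ℚ)^(2*i+2+2*k) - 1))
          = ∏ k ∈ Finset.range (s+1), ((q:ℚ)^(2*(i+k)+2) - 1) := by
        apply Finset.prod_congr rfl
        intro k _
        congr 2
        omega
      have e2 : (∏ k ∈ Finset.range (s+1), ((q:ℚ)^(2*i+2+2*k+1) - 1))
          = ∏ k ∈ Finset.range (s+1), ((q:ℚ)^(2*i+3+2*k) - 1) := by
        apply Finset.prod_congr rfl
        intro k _
        congr 2
        omega
      rw [e1, e2]
      rw [Nat.sub_eq_of_eq_add (ch2_odd_diff i s)]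
      field_simp
      ring

end PartC


end Proofs

theorem card_alternating_matrices_of_rank
    (F : Type*) [Field F] [Fintype F] (q : ℕ) (hq : q = Fintype.card F)
    (n δ i : ℕ) (hn : 1 ≤ n) (hδ : δ = 0 ∨ δ = 1) (hi : i ≤ n) :
    ((Finset.univ.filter
        (fun x : Matrix (Fin (2 * n + δ)) (Fin (2 * n + δ)) F =>
          x.transpose = -x ∧ (∀ j, x j j = 0) ∧ x.rank = 2 * (n - i))).card : ℚ)
      = qBinom (((q : ℚ))⁻¹ ^ 2) n i *
          qPoch (((q : ℚ))⁻¹ ^ (2 * (i + δ) + 1)) (((q : ℚ))⁻¹ ^ 2) (n - i) *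
          (q : ℚ) ^ ((2 * n + δ).choose 2 - (2 * i + δ).choose 2) := by
  subst hq
  have hq2 : 2 ≤ Fintype.card F := Fintype.one_lt_card
  have h0 : ((Finset.univ.filter
        (fun x : Matrix (Fin (2 * n + δ)) (Fin (2 * n + δ)) F =>
          x.transpose = -x ∧ (∀ j, x j j = 0) ∧ x.rank = 2 * (n - i))).card : ℚ)
      = (altCount F (2*n+δ) (n-i) : ℚ) := rfl
  rw [h0, altCount_eq_hAux (2*n+δ) (n-i) (by omega),
    show 2*n+δ - 2*(n-i) = 2*i+δ by omega]
  have key := hAux_eq_target (q := Fintype.card F) hq2 i (n-i) δ hδ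
  rw [show i + (n-i) = n by omega] at key
  exact key

end
end
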